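/- Let b ∈ {1,2,3}, and set x₀ := 1 if b is odd and x₀ := 2 if b is even. Then for every integer a ≥ b+2 and every real number x > x₀, the derivative satisfies Δ_{a,b}′(x) > 0. -/

import Mathlib

open Polynomial Finset

/-- The polynomials `P n` defined by `P 0 = 1` and
`n * P n = X * ∑_{k=1}^n σ(k) * P (n-k)`, i.e. the coefficients of
`∏ (1 - q^j)^{-x} = ∑ P_n(x) q^n`. -/
noncomputable def P : ℕ → Polynomial ℝ
  | 0 => 1
  | n + 1 => ((n + 1 : ℝ)⁻¹) • (X * ∑ k ∈ Finset.range (n + 1),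
      ((∑ d ∈ (k + 1).divisors, d : ℕ) : ℝ) • P (n - k))

/-- `Δ a b = P (a-1) * P (b+1) - P a * P b`. -/
noncomputable def Δ (a b : ℕ) : Polynomial ℝ :=
  P (a - 1) * P (b + 1) - P a * P b

def sig (n : ℕ) : ℕ := ∑ d ∈ n.divisors, d

def nng (p : ℝ[X]) : Prop := ∀ i, 0 ≤ p.coeff i

lemma nng_add {p q : ℝ[X]} (hp : nng p) (hq : nng q) : nng (p + q) := by
  intro i; simp only [coeff_add]; exact add_nonneg (hp i) (hq i)

lemma nng_zero : nng (0 : ℝ[X]) := by intro i; simp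

lemma nng_one : nng (1 : ℝ[X]) := by
  intro i; rcases i with _|i <;> simp [coeff_one]

lemma nng_X : nng (X : ℝ[X]) := by
  intro i; rcases i with _|_|i <;> simp [coeff_X]

lemma nng_mul {p q : ℝ[X]} (hp : nng p) (hq : nng q) : nng (p * q) := by
  intro i; rw [coeff_mul]
  exact Finset.sum_nonneg fun u _ => mul_nonneg (hp u.1) (hq u.2)

lemma nng_natCast (n : ℕ) : nng ((n : ℝ[X])) := by
  intro i; rcases i with _|i <;> simp

lemma nng_sum {s : Finset ℕ} {f : ℕ → ℝ[X]} (h : ∀ k ∈ s, nng (f k)) :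
    nng (∑ k ∈ s, f k) := by
  intro i; rw [finset_sum_coeff]
  exact Finset.sum_nonneg fun k hk => h k hk i

lemma nng_pow {p : ℝ[X]} (hp : nng p) (t : ℕ) : nng (p ^ t) := by
  induction t with
  | zero => simpa using nng_one
  | succ t ih => rw [pow_succ]; exact nng_mul ih hp

lemma natCast_mul_coeff (N : ℕ) (p : ℝ[X]) (i : ℕ) :
    ((N : ℝ[X]) * p).coeff i = (N : ℝ) * p.coeff i := by
  rw [← Polynomial.C_eq_natCast, coeff_C_mul]

lemma nng_descale {N : ℕ} (hN : 0 < N) {p : ℝ[X]} (h : nng ((N : ℝ[X]) * p)) :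
    nng p := by
  intro i
  have := h i
  rw [natCast_mul_coeff] at this
  nlinarith [this, (Nat.cast_pos (α := ℝ)).2 hN]

lemma nng_congr {p q : ℝ[X]} (h : p = q) (hq : nng q) : nng p := h ▸ hq

noncomputable def ofL : List ℕ → ℝ[X]
  | [] => 0
  | a :: t => (a : ℝ[X]) + X * ofL t

@[simp] lemma ofL_nil : ofL [] = 0 := rfl
@[simp] lemma ofL_cons (a : ℕ) (t : List ℕ) : ofL (a :: t) = (a : ℝ[X]) + X * ofL t := rfl

lemma nng_ofL (l : List ℕ) : nng (ofL l) := by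
  induction l with
  | nil => simpa using nng_zero
  | cons a t ih => exact nng_add (nng_natCast a) (nng_mul nng_X ih)

lemma recP (n : ℕ) : ((n+1 : ℕ) : ℝ[X]) * P (n+1)
    = X * ∑ k ∈ Finset.range (n + 1), ((sig (k+1) : ℕ) : ℝ[X]) * P (n - k) := by
  rw [show P (n+1) = ((n + 1 : ℝ)⁻¹) • (X * ∑ k ∈ Finset.range (n + 1),
      ((∑ d ∈ (k + 1).divisors, d : ℕ) : ℝ) • P (n - k)) from by rw [P]]
  rw [← Polynomial.C_eq_natCast, ← Polynomial.smul_eq_C_mul, smul_smul]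
  rw [show ((n+1:ℕ):ℝ) * ((n:ℝ) + 1)⁻¹ = 1 by push_cast; field_simp]
  rw [one_smul]
  congr 1
  refine Finset.sum_congr rfl fun k _ => ?_
  rw [Polynomial.smul_eq_C_mul, Polynomial.C_eq_natCast]
  rfl

noncomputable def Q (c : ℕ) (n : ℕ) : ℝ[X] := (P n).comp (X + (c : ℝ[X]))

lemma Q_zero (c : ℕ) : Q c 0 = 1 := by
  show (P 0).comp _ = 1
  rw [show P 0 = 1 from by rw [P]]
  simp

lemma recQ (c : ℕ) (n : ℕ) : ((n+1 : ℕ) : ℝ[X]) * Q c (n+1)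
    = (X + (c : ℝ[X])) * ∑ k ∈ Finset.range (n + 1), ((sig (k+1) : ℕ) : ℝ[X]) * Q c (n - k) := by
  have := congrArg (fun p => p.comp (X + (c : ℝ[X]))) (recP n)
  simp only [mul_comp, natCast_comp, X_comp, Polynomial.sum_comp, add_comp] at this
  exact this

lemma nngQ (c : ℕ) (n : ℕ) : nng (Q c n) := by
  induction n using Nat.strong_induction_on with
  | _ n ih =>
    match n with
    | 0 => rw [Q_zero]; exact nng_one
    | n+1 =>
      apply nng_descale (N := n+1) (Nat.succ_pos n)
      rw [recQ]
      exact nng_mul (nng_add nng_X (nng_natCast c))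
        (nng_sum fun k hk => nng_mul (nng_natCast _) (ih (n-k) (by omega)))

noncomputable def Eo (c b m : ℕ) : ℝ[X] := Q c m * Q c (b+1) - Q c (m+1) * Q c b

noncomputable def U (c b : ℕ) : ℝ[X] := (X + (c:ℝ[X]))^(b+1) * Q c b

lemma Eo_self (c b : ℕ) : Eo c b b = 0 := by unfold Eo; ring

lemma nng_U (c b : ℕ) : nng (U c b) :=
  nng_mul (nng_pow (nng_add nng_X (nng_natCast c)) _) (nngQ c b)

lemma diamond (c b n : ℕ) (hn : 1 ≤ n) :
    ((n+1:ℕ) : ℝ[X]) * Eo c b n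
      = Q c n * Q c (b+1)
        + (X + (c:ℝ[X])) * ∑ k ∈ range n, ((sig (k+1) : ℕ) : ℝ[X]) * Eo c b (n-1-k)
        - ((sig (n+1) : ℕ) : ℝ[X]) * ((X + (c:ℝ[X])) * Q c b) := by
  have h1 := recQ c n
  have h2 := recQ c (n-1)
  rw [show n - 1 + 1 = n from by omega] at h2
  have h3 : (∑ k ∈ range (n+1), ((sig (k+1):ℕ):ℝ[X]) * Q c (n-k)) * Q c b
      = (∑ k ∈ range n, ((sig (k+1):ℕ):ℝ[X]) * Q c (n-1-k)) * Q c (b+1)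
        - ∑ k ∈ range n, ((sig (k+1):ℕ):ℝ[X]) * Eo c b (n-1-k)
        + ((sig (n+1):ℕ):ℝ[X]) * Q c b := by
    rw [Finset.sum_range_succ, Nat.sub_self, Q_zero, add_mul, mul_one, Finset.sum_mul,
      Finset.sum_mul, ← Finset.sum_sub_distrib]
    congr 1
    refine Finset.sum_congr rfl fun k hk => ?_
    unfold Eo
    rw [show n - 1 - k + 1 = n - k from by have := mem_range.1 hk; omega]
    ring
  have e : ((n+1:ℕ):ℝ[X]) * Eo c b n
      = ((n+1:ℕ):ℝ[X]) * (Q c n * Q c (b+1)) - (((n+1:ℕ):ℝ[X]) * Q c (n+1)) * Q c b := by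
    unfold Eo; ring
  rw [e, h1]
  linear_combination (norm := (push_cast; ring1)) (-(X + (c:ℝ[X]))) * h3 + (Q c (b+1)) * h2

lemma nng_pow_sub_one (c : ℕ) (hc : 1 ≤ c) (t : ℕ) :
    nng ((X + (c:ℝ[X]))^t - 1) := by
  induction t with
  | zero => simpa using nng_zero
  | succ t ih =>
    have he : (X + (c:ℝ[X]))^(t+1) - 1
        = X * (X + (c:ℝ[X]))^t + (c:ℝ[X]) * ((X + (c:ℝ[X]))^t - 1) + ((c-1:ℕ):ℝ[X]) := by
      rw [Nat.cast_sub hc]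
      push_cast
      ring
    rw [he]
    exact nng_add (nng_add (nng_mul nng_X (nng_pow (nng_add nng_X (nng_natCast c)) t))
      (nng_mul (nng_natCast c) ih)) (nng_natCast _)

lemma nng_U_sub_Q (c b : ℕ) (hc : 1 ≤ c) : nng (U c b - Q c b) := by
  have he : U c b - Q c b = ((X + (c:ℝ[X]))^(b+1) - 1) * Q c b := by unfold U; ring
  rw [he]
  exact nng_mul (nng_pow_sub_one c hc (b+1)) (nngQ c b)

lemma nng_yU_sub_U (c b : ℕ) (hc : 1 ≤ c) :
    nng ((X + (c:ℝ[X])) * U c b - U c b) := by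
  have he : (X + (c:ℝ[X])) * U c b - U c b = (X + ((c-1:ℕ):ℝ[X])) * U c b := by
    rw [Nat.cast_sub hc]; push_cast; ring
  rw [he]
  exact nng_mul (nng_add nng_X (nng_natCast _)) (nng_U c b)

lemma sig_ge (n : ℕ) : n ≤ sig n := by
  rcases Nat.eq_zero_or_pos n with h|h
  · simp [h, sig]
  · exact Finset.single_le_sum (f := fun d => d) (fun i _ => Nat.zero_le i)
      (Nat.mem_divisors_self n h.ne')

def sB (n : ℕ) : ℕ := 2*n + (n/2)*(n/2+1)

lemma sig_le (n : ℕ) : 2 * sig n ≤ sB n := by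
  rcases Nat.eq_zero_or_pos n with h|h
  · simp [h, sig, sB]
  · have h1 : sig n = (∑ d ∈ n.properDivisors, d) + n :=
      Nat.sum_divisors_eq_sum_properDivisors_add_self
    have h2 : n.properDivisors ⊆ Finset.range (n/2+1) := by
      intro d hd
      rw [Nat.mem_properDivisors] at hd
      rw [Finset.mem_range]
      have hdvd := hd.1
      have hlt := hd.2
      have : d ≤ n / 2 := by
        obtain ⟨k, hk⟩ := hdvd
        have hk2 : 2 ≤ k := by
          rcases k with _|_|k
          · omega
          · omega
          · omega
        refine Nat.le_div_iff_mul_le (by norm_num) |>.2 ?_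
        calc d * 2 ≤ d * k := Nat.mul_le_mul_left d hk2
          _ = n := hk.symm
      omega
    have h3 : (∑ d ∈ n.properDivisors, d) ≤ ∑ d ∈ Finset.range (n/2+1), d :=
      Finset.sum_le_sum_of_subset h2
    have h4 : (∑ d ∈ Finset.range (n/2+1), d) * 2 = (n/2) * (n/2+1) := by
      rw [Finset.sum_range_id_mul_two]; simp [Nat.mul_comm]
    unfold sB
    omega

lemma sB_mono : Monotone sB := by
  intro a b hab
  unfold sB
  have h1 : a/2 ≤ b/2 := Nat.div_le_div_right hab
  have := Nat.mul_le_mul h1 (Nat.add_le_add_right h1 1)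
  omega

lemma sumT (n : ℕ) : ∀ K, K ≤ n → 6 * (∑ k ∈ range K, (k+1)*(n-k)) = K*(K+1)*(3*n+2-2*K) := by
  intro K
  induction K with
  | zero => simp
  | succ K ih =>
    intro hK
    rw [Finset.sum_range_succ, Nat.mul_add, ih (by omega)]
    zify [show 2*K ≤ 3*n+2 by omega, show K ≤ n by omega, show 2*(K+1) ≤ 3*n+2 by omega]
    ring

def GoodE (p : ℝ[X]) : Prop :=
  ∃ (N cc : ℕ) (q : ℝ[X]), 0 < N ∧ 0 < cc ∧ nng q ∧ (N : ℝ[X]) * p = q + (cc : ℝ[X]) * X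

lemma nng_eval {p : ℝ[X]} (h : nng p) {t : ℝ} (ht : 0 ≤ t) : 0 ≤ p.eval t := by
  rw [Polynomial.eval_eq_sum_range]
  exact Finset.sum_nonneg fun i _ => mul_nonneg (h i) (pow_nonneg ht i)

lemma GoodE_deriv_pos {p : ℝ[X]} (h : GoodE p) {t : ℝ} (ht : 0 ≤ t) :
    0 < (derivative p).eval t := by
  obtain ⟨N, cc, q, hN, hcc, hq, he⟩ := h
  have hd := congrArg (fun r => (derivative r).eval t) he
  simp only [derivative_mul, derivative_natCast, derivative_add, derivative_X, mul_one,
    zero_mul, zero_add, eval_add, eval_mul, eval_natCast] at hd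
  have hq' : nng (derivative q) := by
    intro i; rw [coeff_derivative]; exact mul_nonneg (hq _) (by positivity)
  have h1 : (0:ℝ) < cc := by exact_mod_cast hcc
  have h2 : (0:ℝ) < N := by exact_mod_cast hN
  have h3 := nng_eval hq' ht
  nlinarith [hd, h3]

theorem main_ind (c b M0 A0 dn dd kn kd : ℕ)
    (hc : 1 ≤ c) (hb : 1 ≤ b) (hbM : b ≤ M0)
    (hdd : 0 < dd) (hkd : 0 < kd)
    (hMA : M0 + b + 1 ≤ A0)
    (Hb1 : ∀ m, b ≤ m → m < M0 → nng (Eo c b m))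
    (Hb2 : ∀ m, M0 ≤ m → m < A0 →
      nng ((dd:ℝ[X]) * Eo c b m - ((dn*(m+1) : ℕ):ℝ[X]) * U c b))
    (Hk : ∀ j, j < b → nng ((kd:ℝ[X]) * Eo c b j + (kn:ℝ[X]) * U c b))
    (Hnum : ∀ n, A0 ≤ n →
      dd*(kn*(∑ k ∈ Ico (n-b) n, sig (k+1))) + kd*(dd*sig (n+1)) + kd*(dn*(n+1)^2)
        ≤ kd*(dn*(∑ k ∈ range (n - M0), sig (k+1)*(n-k)))) :
    ∀ m, (b ≤ m → nng (Eo c b m)) ∧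
       (M0 ≤ m → nng ((dd:ℝ[X]) * Eo c b m - ((dn*(m+1):ℕ):ℝ[X]) * U c b)) := by
  intro m
  induction m using Nat.strong_induction_on with
  | _ n ih =>
  have descale2 : nng ((dd:ℝ[X]) * Eo c b n - ((dn*(n+1):ℕ):ℝ[X]) * U c b) → nng (Eo c b n) := by
    intro h2
    apply nng_descale (N := dd) hdd
    have he : (dd:ℝ[X]) * Eo c b n
        = ((dd:ℝ[X]) * Eo c b n - ((dn*(n+1):ℕ):ℝ[X]) * U c b)
          + ((dn*(n+1):ℕ):ℝ[X]) * U c b := by ring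
    rw [he]; exact nng_add h2 (nng_mul (nng_natCast _) (nng_U c b))
  by_cases hA : n < A0
  · constructor
    · intro hbn
      by_cases hM : n < M0
      · exact Hb1 n hbn hM
      · exact descale2 (Hb2 n (by omega) hA)
    · intro hM; exact Hb2 n hM hA
  · push_neg at hA
    have hn1 : 1 ≤ n := by omega
    have part2 : nng ((dd:ℝ[X]) * Eo c b n - ((dn*(n+1):ℕ):ℝ[X]) * U c b) := by
      apply nng_descale (N := kd*(n+1)) (by positivity)
      obtain ⟨Z, hZ⟩ := Nat.le.dest (Hnum n hA)
      set K := n - M0 with hKdef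
      set S1 := ∑ k ∈ range K, sig (k+1)*(n-k) with hS1def
      set S2 := ∑ k ∈ Ico (n-b) n, sig (k+1) with hS2def
      -- chunk 1
      have ch1 : nng ((∑ k ∈ range K, ((kd*sig (k+1):ℕ):ℝ[X]) * ((dd:ℝ[X]) * Eo c b (n-1-k)))
          - ((kd*(dn*S1):ℕ):ℝ[X]) * U c b) := by
        have term1 : ∀ k ∈ range K, nng
            (((kd*sig (k+1):ℕ):ℝ[X]) * ((dd:ℝ[X]) * Eo c b (n-1-k))
              - ((kd*(sig (k+1)*(dn*(n-k))):ℕ):ℝ[X]) * U c b) := by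
          intro k hk
          have hk' := mem_range.1 hk
          have h := (ih (n-1-k) (by omega)).2 (by omega)
          rw [show n-1-k+1 = n-k from by omega] at h
          refine nng_congr ?_ (nng_mul (nng_natCast (kd*sig (k+1))) h)
          push_cast; ring
        refine nng_congr ?_ (nng_sum term1)
        rw [Finset.sum_sub_distrib]
        congr 1
        rw [← Finset.sum_mul, ← Nat.cast_sum]
        congr 2
        rw [hS1def, Finset.mul_sum, Finset.mul_sum]
        exact Finset.sum_congr rfl fun k _ => by ring
      -- chunk 2
      have ch2 : nng (∑ k ∈ Ico K (n-b), ((kd*sig (k+1):ℕ):ℝ[X])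
          * ((dd:ℝ[X]) * Eo c b (n-1-k))) := by
        refine nng_sum fun k hk => ?_
        have hk' := mem_Ico.1 hk
        exact nng_mul (nng_natCast _) (nng_mul (nng_natCast _)
          ((ih (n-1-k) (by omega)).1 (by omega)))
      -- chunk 3
      have ch3 : nng ((∑ k ∈ Ico (n-b) n, ((kd*sig (k+1):ℕ):ℝ[X])
          * ((dd:ℝ[X]) * Eo c b (n-1-k))) + ((dd*(kn*S2):ℕ):ℝ[X]) * U c b) := by
        have term3 : ∀ k ∈ Ico (n-b) n, nng
            (((kd*sig (k+1):ℕ):ℝ[X]) * ((dd:ℝ[X]) * Eo c b (n-1-k))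
              + ((dd*(sig (k+1)*kn):ℕ):ℝ[X]) * U c b) := by
          intro k hk
          have hk' := mem_Ico.1 hk
          refine nng_congr ?_ (nng_mul (nng_natCast (dd*sig (k+1))) (Hk (n-1-k) (by omega)))
          push_cast; ring
        refine nng_congr ?_ (nng_sum term3)
        rw [Finset.sum_add_distrib]
        congr 1
        rw [← Finset.sum_mul, ← Nat.cast_sum]
        congr 2
        rw [hS2def, Finset.mul_sum, Finset.mul_sum]
        exact Finset.sum_congr rfl fun k _ => by ring
      -- combine chunks
      have hsplit : (∑ k ∈ range n, ((kd*sig (k+1):ℕ):ℝ[X]) * ((dd:ℝ[X]) * Eo c b (n-1-k)))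
          = (∑ k ∈ range K, ((kd*sig (k+1):ℕ):ℝ[X]) * ((dd:ℝ[X]) * Eo c b (n-1-k)))
            + (∑ k ∈ Ico K (n-b), ((kd*sig (k+1):ℕ):ℝ[X]) * ((dd:ℝ[X]) * Eo c b (n-1-k)))
            + (∑ k ∈ Ico (n-b) n, ((kd*sig (k+1):ℕ):ℝ[X]) * ((dd:ℝ[X]) * Eo c b (n-1-k))) := by
        rw [Finset.range_eq_Ico,
          ← Finset.sum_Ico_consecutive _ (Nat.zero_le K) (show K ≤ n by omega),
          ← Finset.sum_Ico_consecutive _ (show K ≤ n-b by omega) (show n-b ≤ n by omega), ← Finset.range_eq_Ico]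
        ring
      have slackB : nng ((∑ k ∈ range n, ((kd*sig (k+1):ℕ):ℝ[X]) * ((dd:ℝ[X]) * Eo c b (n-1-k)))
          + ((dd*(kn*S2):ℕ):ℝ[X]) * U c b - ((kd*(dn*S1):ℕ):ℝ[X]) * U c b) := by
        refine nng_congr ?_ (nng_add (nng_add ch1 ch2) ch3)
        rw [hsplit]; ring
      have hfull : (∑ k ∈ range n, ((kd*sig (k+1):ℕ):ℝ[X]) * ((dd:ℝ[X]) * Eo c b (n-1-k)))
          = ((kd*dd:ℕ):ℝ[X]) * (∑ k ∈ range n, ((sig (k+1):ℕ):ℝ[X]) * Eo c b (n-1-k)) := by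
        rw [Finset.mul_sum]
        exact Finset.sum_congr rfl fun k _ => by push_cast; ring
      have hdia := diamond c b n hn1
      have hZ' : ((dd*(kn*S2) + kd*(dd*sig (n+1)) + kd*(dn*(n+1)^2) + Z : ℕ) : ℝ[X])
          = ((kd*(dn*S1) : ℕ) : ℝ[X]) := by exact_mod_cast congrArg (Nat.cast : ℕ → ℝ[X]) hZ
      -- assembly
      refine nng_congr ?_ (nng_add (nng_add (nng_add (nng_add
        (nng_mul (nng_natCast (kd*dd)) (nng_mul (nngQ c n) (nngQ c (b+1))))
        (nng_mul (nng_add nng_X (nng_natCast c)) slackB))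
        (nng_mul (nng_natCast (kd*(dd*sig (n+1))))
          (nng_mul (nng_add nng_X (nng_natCast c)) (nng_U_sub_Q c b hc))))
        (nng_mul (nng_natCast (kd*(dn*(n+1)^2))) (nng_yU_sub_U c b hc)))
        (nng_mul (nng_natCast Z) (nng_mul (nng_add nng_X (nng_natCast c)) (nng_U c b))))
      rw [hfull] at slackB ⊢
      linear_combination (norm := (push_cast; ring1))
        ((kd:ℝ[X]) * (dd:ℝ[X])) * hdia - ((X + (c:ℝ[X])) * U c b) * hZ'
    exact ⟨fun _ => descale2 part2, fun _ => part2⟩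
lemma sigv1 : sig 1 = 1 := by decide

lemma sigv2 : sig 2 = 3 := by decide

lemma sigv3 : sig 3 = 4 := by decide

lemma sigv4 : sig 4 = 7 := by decide

lemma sigv5 : sig 5 = 6 := by decide

lemma sigv6 : sig 6 = 12 := by decide

lemma sigv7 : sig 7 = 8 := by decide

lemma sigv8 : sig 8 = 15 := by decide

lemma sigv9 : sig 9 = 13 := by decide

lemma sigv10 : sig 10 = 18 := by decide

lemma sigv11 : sig 11 = 12 := by decide

lemma sigv12 : sig 12 = 28 := by decide

lemma sigv13 : sig 13 = 14 := by decide

lemma sigv14 : sig 14 = 24 := by decide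

lemma sigv15 : sig 15 = 24 := by decide

lemma sigv16 : sig 16 = 31 := by decide

lemma sigv17 : sig 17 = 18 := by decide

lemma sigv18 : sig 18 = 39 := by decide

lemma sigv19 : sig 19 = 20 := by decide

lemma sigv20 : sig 20 = 42 := by decide

lemma sigv21 : sig 21 = 32 := by decide

lemma Q1_0 : (1:ℝ[X]) * Q 1 0 = (1:ℝ[X]) := by rw [Q_zero]; norm_num

lemma Q1_1 : (1:ℝ[X]) * Q 1 1 = (1:ℝ[X]) + X := by
  have r := recQ 1 0
  rw [Finset.sum_range_succ, Finset.sum_range_zero] at r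
  norm_num [sigv1, Q_zero] at r
  linear_combination (norm := (push_cast; ring1)) (1:ℝ[X]) * r

lemma Q1_2 : (2:ℝ[X]) * Q 1 2 = (4:ℝ[X]) + (5:ℝ[X])*X + X^2 := by
  have r := recQ 1 1
  rw [Finset.sum_range_succ, Finset.sum_range_succ, Finset.sum_range_zero] at r
  norm_num [sigv1, sigv2, Q_zero] at r
  linear_combination (norm := (push_cast; ring1)) (1:ℝ[X]) * r + ((1:ℝ[X]) * (X + 1)) * Q1_1

lemma Q1_3 : (6:ℝ[X]) * Q 1 3 = (18:ℝ[X]) + (29:ℝ[X])*X + (12:ℝ[X])*X^2 + X^3 := by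
  have r := recQ 1 2
  rw [Finset.sum_range_succ, Finset.sum_range_succ, Finset.sum_range_succ, Finset.sum_range_zero] at r
  norm_num [sigv1, sigv2, sigv3, Q_zero] at r
  linear_combination (norm := (push_cast; ring1)) (2:ℝ[X]) * r + ((6:ℝ[X]) * (X + 1)) * Q1_1 + ((1:ℝ[X]) * (X + 1)) * Q1_2

lemma Q1_4 : (24:ℝ[X]) * Q 1 4 = (120:ℝ[X]) + (218:ℝ[X])*X + (119:ℝ[X])*X^2 + (22:ℝ[X])*X^3 + X^4 := by
  have r := recQ 1 3
  rw [Finset.sum_range_succ, Finset.sum_range_succ, Finset.sum_range_succ, Finset.sum_range_succ, Finset.sum_range_zero] at r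
  norm_num [sigv1, sigv2, sigv3, sigv4, Q_zero] at r
  linear_combination (norm := (push_cast; ring1)) (6:ℝ[X]) * r + ((24:ℝ[X]) * (X + 1)) * Q1_1 + ((9:ℝ[X]) * (X + 1)) * Q1_2 + ((1:ℝ[X]) * (X + 1)) * Q1_3

lemma Q1_5 : (120:ℝ[X]) * Q 1 5 = (840:ℝ[X]) + (1814:ℝ[X])*X + (1285:ℝ[X])*X^2 + (345:ℝ[X])*X^3 + (35:ℝ[X])*X^4 + X^5 := by
  have r := recQ 1 4
  rw [Finset.sum_range_succ, Finset.sum_range_succ, Finset.sum_range_succ, Finset.sum_range_succ, Finset.sum_range_succ, Finset.sum_range_zero] at r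
  norm_num [sigv1, sigv2, sigv3, sigv4, sigv5, Q_zero] at r
  linear_combination (norm := (push_cast; ring1)) (24:ℝ[X]) * r + ((168:ℝ[X]) * (X + 1)) * Q1_1 + ((48:ℝ[X]) * (X + 1)) * Q1_2 + ((12:ℝ[X]) * (X + 1)) * Q1_3 + ((1:ℝ[X]) * (X + 1)) * Q1_4

lemma Q1_6 : (720:ℝ[X]) * Q 1 6 = (7920:ℝ[X]) + (18144:ℝ[X])*X + (14674:ℝ[X])*X^2 + (5205:ℝ[X])*X^3 + (805:ℝ[X])*X^4 + (51:ℝ[X])*X^5 + X^6 := by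
  have r := recQ 1 5
  rw [Finset.sum_range_succ, Finset.sum_range_succ, Finset.sum_range_succ, Finset.sum_range_succ, Finset.sum_range_succ, Finset.sum_range_succ, Finset.sum_range_zero] at r
  norm_num [sigv1, sigv2, sigv3, sigv4, sigv5, sigv6, Q_zero] at r
  linear_combination (norm := (push_cast; ring1)) (120:ℝ[X]) * r + ((720:ℝ[X]) * (X + 1)) * Q1_1 + ((420:ℝ[X]) * (X + 1)) * Q1_2 + ((80:ℝ[X]) * (X + 1)) * Q1_3 + ((15:ℝ[X]) * (X + 1)) * Q1_4 + ((1:ℝ[X]) * (X + 1)) * Q1_5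

lemma Q1_7 : (5040:ℝ[X]) * Q 1 7 = (75600:ℝ[X]) + (196356:ℝ[X])*X + (185080:ℝ[X])*X^2 + (79219:ℝ[X])*X^3 + (16450:ℝ[X])*X^4 + (1624:ℝ[X])*X^5 + (70:ℝ[X])*X^6 + X^7 := by
  have r := recQ 1 6
  rw [Finset.sum_range_succ, Finset.sum_range_succ, Finset.sum_range_succ, Finset.sum_range_succ, Finset.sum_range_succ, Finset.sum_range_succ, Finset.sum_range_succ, Finset.sum_range_zero] at r
  norm_num [sigv1, sigv2, sigv3, sigv4, sigv5, sigv6, sigv7, Q_zero] at r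
  linear_combination (norm := (push_cast; ring1)) (720:ℝ[X]) * r + ((8640:ℝ[X]) * (X + 1)) * Q1_1 + ((2160:ℝ[X]) * (X + 1)) * Q1_2 + ((840:ℝ[X]) * (X + 1)) * Q1_3 + ((120:ℝ[X]) * (X + 1)) * Q1_4 + ((18:ℝ[X]) * (X + 1)) * Q1_5 + ((1:ℝ[X]) * (X + 1)) * Q1_6

lemma Q1_8 : (40320:ℝ[X]) * Q 1 8 = (887040:ℝ[X]) + (2427312:ℝ[X])*X + (2515036:ℝ[X])*X^2 + (1258628:ℝ[X])*X^3 + (324569:ℝ[X])*X^4 + (43568:ℝ[X])*X^5 + (2954:ℝ[X])*X^6 + (92:ℝ[X])*X^7 + X^8 := by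
  have r := recQ 1 7
  rw [Finset.sum_range_succ, Finset.sum_range_succ, Finset.sum_range_succ, Finset.sum_range_succ, Finset.sum_range_succ, Finset.sum_range_succ, Finset.sum_range_succ, Finset.sum_range_succ, Finset.sum_range_zero] at r
  norm_num [sigv1, sigv2, sigv3, sigv4, sigv5, sigv6, sigv7, sigv8, Q_zero] at r
  linear_combination (norm := (push_cast; ring1)) (5040:ℝ[X]) * r + ((40320:ℝ[X]) * (X + 1)) * Q1_1 + ((30240:ℝ[X]) * (X + 1)) * Q1_2 + ((5040:ℝ[X]) * (X + 1)) * Q1_3 + ((1470:ℝ[X]) * (X + 1)) * Q1_4 + ((168:ℝ[X]) * (X + 1)) * Q1_5 + ((21:ℝ[X]) * (X + 1)) * Q1_6 + ((1:ℝ[X]) * (X + 1)) * Q1_7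

lemma Q1_9 : (362880:ℝ[X]) * Q 1 9 = (10886400:ℝ[X]) + (32304240:ℝ[X])*X + (37012572:ℝ[X])*X^2 + (21034376:ℝ[X])*X^3 + (6431733:ℝ[X])*X^4 + (1088409:ℝ[X])*X^5 + (101178:ℝ[X])*X^6 + (4974:ℝ[X])*X^7 + (117:ℝ[X])*X^8 + X^9 := by
  have r := recQ 1 8
  rw [Finset.sum_range_succ, Finset.sum_range_succ, Finset.sum_range_succ, Finset.sum_range_succ, Finset.sum_range_succ, Finset.sum_range_succ, Finset.sum_range_succ, Finset.sum_range_succ, Finset.sum_range_succ, Finset.sum_range_zero] at r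
  norm_num [sigv1, sigv2, sigv3, sigv4, sigv5, sigv6, sigv7, sigv8, sigv9, Q_zero] at r
  linear_combination (norm := (push_cast; ring1)) (40320:ℝ[X]) * r + ((604800:ℝ[X]) * (X + 1)) * Q1_1 + ((161280:ℝ[X]) * (X + 1)) * Q1_2 + ((80640:ℝ[X]) * (X + 1)) * Q1_3 + ((10080:ℝ[X]) * (X + 1)) * Q1_4 + ((2352:ℝ[X]) * (X + 1)) * Q1_5 + ((224:ℝ[X]) * (X + 1)) * Q1_6 + ((24:ℝ[X]) * (X + 1)) * Q1_7 + ((1:ℝ[X]) * (X + 1)) * Q1_8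

lemma Q1_10 : (3628800:ℝ[X]) * Q 1 10 = (152409600:ℝ[X]) + (475637760:ℝ[X])*X + (586653696:ℝ[X])*X^2 + (370356380:ℝ[X])*X^3 + (130520060:ℝ[X])*X^4 + (26519745:ℝ[X])*X^5 + (3135153:ℝ[X])*X^6 + (212370:ℝ[X])*X^7 + (7890:ℝ[X])*X^8 + (145:ℝ[X])*X^9 + X^10 := by
  have r := recQ 1 9
  rw [Finset.sum_range_succ, Finset.sum_range_succ, Finset.sum_range_succ, Finset.sum_range_succ, Finset.sum_range_succ, Finset.sum_range_succ, Finset.sum_range_succ, Finset.sum_range_succ, Finset.sum_range_succ, Finset.sum_range_succ, Finset.sum_range_zero] at r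
  norm_num [sigv1, sigv2, sigv3, sigv4, sigv5, sigv6, sigv7, sigv8, sigv9, sigv10, Q_zero] at r
  linear_combination (norm := (push_cast; ring1)) (362880:ℝ[X]) * r + ((4717440:ℝ[X]) * (X + 1)) * Q1_1 + ((2721600:ℝ[X]) * (X + 1)) * Q1_2 + ((483840:ℝ[X]) * (X + 1)) * Q1_3 + ((181440:ℝ[X]) * (X + 1)) * Q1_4 + ((18144:ℝ[X]) * (X + 1)) * Q1_5 + ((3528:ℝ[X]) * (X + 1)) * Q1_6 + ((288:ℝ[X]) * (X + 1)) * Q1_7 + ((27:ℝ[X]) * (X + 1)) * Q1_8 + ((1:ℝ[X]) * (X + 1)) * Q1_9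

lemma Q1_11 : (39916800:ℝ[X]) * Q 1 11 = (2235340800:ℝ[X]) + (7460546400:ℝ[X])*X + (9946888776:ℝ[X])*X^2 + (6893716676:ℝ[X])*X^3 + (2733511990:ℝ[X])*X^4 + (646425065:ℝ[X])*X^5 + (92563548:ℝ[X])*X^6 + (8016723:ℝ[X])*X^7 + (411510:ℝ[X])*X^8 + (11935:ℝ[X])*X^9 + (176:ℝ[X])*X^10 + X^11 := by
  have r := recQ 1 10
  rw [Finset.sum_range_succ, Finset.sum_range_succ, Finset.sum_range_succ, Finset.sum_range_succ, Finset.sum_range_succ, Finset.sum_range_succ, Finset.sum_range_succ, Finset.sum_range_succ, Finset.sum_range_succ, Finset.sum_range_succ, Finset.sum_range_succ, Finset.sum_range_zero] at r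
  norm_num [sigv1, sigv2, sigv3, sigv4, sigv5, sigv6, sigv7, sigv8, sigv9, sigv10, sigv11, Q_zero] at r
  linear_combination (norm := (push_cast; ring1)) (3628800:ℝ[X]) * r + ((65318400:ℝ[X]) * (X + 1)) * Q1_1 + ((23587200:ℝ[X]) * (X + 1)) * Q1_2 + ((9072000:ℝ[X]) * (X + 1)) * Q1_3 + ((1209600:ℝ[X]) * (X + 1)) * Q1_4 + ((362880:ℝ[X]) * (X + 1)) * Q1_5 + ((30240:ℝ[X]) * (X + 1)) * Q1_6 + ((5040:ℝ[X]) * (X + 1)) * Q1_7 + ((360:ℝ[X]) * (X + 1)) * Q1_8 + ((30:ℝ[X]) * (X + 1)) * Q1_9 + ((1:ℝ[X]) * (X + 1)) * Q1_10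

lemma Q1_12 : (479001600:ℝ[X]) * Q 1 12 = (36883123200:ℝ[X]) + (127525829760:ℝ[X])*X + (180006657984:ℝ[X])*X^2 + (135237544200:ℝ[X])*X^3 + (59428834036:ℝ[X])*X^4 + (15971406990:ℝ[X])*X^5 + (2681170547:ℝ[X])*X^6 + (282903390:ℝ[X])*X^7 + (18628863:ℝ[X])*X^8 + (747450:ℝ[X])*X^9 + (17369:ℝ[X])*X^10 + (210:ℝ[X])*X^11 + X^12 := by
  have r := recQ 1 11
  rw [Finset.sum_range_succ, Finset.sum_range_succ, Finset.sum_range_succ, Finset.sum_range_succ, Finset.sum_range_succ, Finset.sum_range_succ, Finset.sum_range_succ, Finset.sum_range_succ, Finset.sum_range_succ, Finset.sum_range_succ, Finset.sum_range_succ, Finset.sum_range_succ, Finset.sum_range_zero] at r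
  norm_num [sigv1, sigv2, sigv3, sigv4, sigv5, sigv6, sigv7, sigv8, sigv9, sigv10, sigv11, sigv12, Q_zero] at r
  linear_combination (norm := (push_cast; ring1)) (39916800:ℝ[X]) * r + ((479001600:ℝ[X]) * (X + 1)) * Q1_1 + ((359251200:ℝ[X]) * (X + 1)) * Q1_2 + ((86486400:ℝ[X]) * (X + 1)) * Q1_3 + ((24948000:ℝ[X]) * (X + 1)) * Q1_4 + ((2661120:ℝ[X]) * (X + 1)) * Q1_5 + ((665280:ℝ[X]) * (X + 1)) * Q1_6 + ((47520:ℝ[X]) * (X + 1)) * Q1_7 + ((6930:ℝ[X]) * (X + 1)) * Q1_8 + ((440:ℝ[X]) * (X + 1)) * Q1_9 + ((33:ℝ[X]) * (X + 1)) * Q1_10 + ((1:ℝ[X]) * (X + 1)) * Q1_11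

lemma Q1_13 : (6227020800:ℝ[X]) * Q 1 13 = (628929100800:ℝ[X]) + (2302819079040:ℝ[X])*X + (3460117647168:ℝ[X])*X^2 + (2795111815704:ℝ[X])*X^3 + (1343598885772:ℝ[X])*X^4 + (403305748846:ℝ[X])*X^5 + (77490430589:ℝ[X])*X^6 + (9636715517:ℝ[X])*X^7 + (776056281:ℝ[X])*X^8 + (40024413:ℝ[X])*X^9 + (1287143:ℝ[X])*X^10 + (24479:ℝ[X])*X^11 + (247:ℝ[X])*X^12 + X^13 := by
  have r := recQ 1 12
  rw [Finset.sum_range_succ, Finset.sum_range_succ, Finset.sum_range_succ, Finset.sum_range_succ, Finset.sum_range_succ, Finset.sum_range_succ, Finset.sum_range_succ, Finset.sum_range_succ, Finset.sum_range_succ, Finset.sum_range_succ, Finset.sum_range_succ, Finset.sum_range_succ, Finset.sum_range_succ, Finset.sum_range_zero] at r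
  norm_num [sigv1, sigv2, sigv3, sigv4, sigv5, sigv6, sigv7, sigv8, sigv9, sigv10, sigv11, sigv12, sigv13, Q_zero] at r
  linear_combination (norm := (push_cast; ring1)) (479001600:ℝ[X]) * r + ((13412044800:ℝ[X]) * (X + 1)) * Q1_1 + ((2874009600:ℝ[X]) * (X + 1)) * Q1_2 + ((1437004800:ℝ[X]) * (X + 1)) * Q1_3 + ((259459200:ℝ[X]) * (X + 1)) * Q1_4 + ((59875200:ℝ[X]) * (X + 1)) * Q1_5 + ((5322240:ℝ[X]) * (X + 1)) * Q1_6 + ((1140480:ℝ[X]) * (X + 1)) * Q1_7 + ((71280:ℝ[X]) * (X + 1)) * Q1_8 + ((9240:ℝ[X]) * (X + 1)) * Q1_9 + ((528:ℝ[X]) * (X + 1)) * Q1_10 + ((36:ℝ[X]) * (X + 1)) * Q1_11 + ((1:ℝ[X]) * (X + 1)) * Q1_12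

lemma Q1_14 : (87178291200:ℝ[X]) * Q 1 14 = (11769069312000:ℝ[X]) + (44659367020800:ℝ[X])*X + (70488552208320:ℝ[X])*X^2 + (60722510660448:ℝ[X])*X^3 + (31618134295384:ℝ[X])*X^4 + (10458142146452:ℝ[X])*X^5 + (2258452702506:ℝ[X])*X^6 + (323104570789:ℝ[X])*X^7 + (30783918737:ℝ[X])*X^8 + (1946505561:ℝ[X])*X^9 + (80553473:ℝ[X])*X^10 + (2119663:ℝ[X])*X^11 + (33579:ℝ[X])*X^12 + (287:ℝ[X])*X^13 + X^14 := by
  have r := recQ 1 13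
  rw [Finset.sum_range_succ, Finset.sum_range_succ, Finset.sum_range_succ, Finset.sum_range_succ, Finset.sum_range_succ, Finset.sum_range_succ, Finset.sum_range_succ, Finset.sum_range_succ, Finset.sum_range_succ, Finset.sum_range_succ, Finset.sum_range_succ, Finset.sum_range_succ, Finset.sum_range_succ, Finset.sum_range_succ, Finset.sum_range_zero] at r
  norm_num [sigv1, sigv2, sigv3, sigv4, sigv5, sigv6, sigv7, sigv8, sigv9, sigv10, sigv11, sigv12, sigv13, sigv14, Q_zero] at r
  linear_combination (norm := (push_cast; ring1)) (6227020800:ℝ[X]) * r + ((87178291200:ℝ[X]) * (X + 1)) * Q1_1 + ((87178291200:ℝ[X]) * (X + 1)) * Q1_2 + ((12454041600:ℝ[X]) * (X + 1)) * Q1_3 + ((4670265600:ℝ[X]) * (X + 1)) * Q1_4 + ((674593920:ℝ[X]) * (X + 1)) * Q1_5 + ((129729600:ℝ[X]) * (X + 1)) * Q1_6 + ((9884160:ℝ[X]) * (X + 1)) * Q1_7 + ((1853280:ℝ[X]) * (X + 1)) * Q1_8 + ((102960:ℝ[X]) * (X + 1)) * Q1_9 + ((12012:ℝ[X]) * (X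 + 1)) * Q1_10 + ((624:ℝ[X]) * (X + 1)) * Q1_11 + ((39:ℝ[X]) * (X + 1)) * Q1_12 + ((1:ℝ[X]) * (X + 1)) * Q1_13

lemma Q1_15 : (1307674368000:ℝ[X]) * Q 1 15 = (230150688768000:ℝ[X]) + (911770840108800:ℝ[X])*X + (1513916534304000:ℝ[X])*X^2 + (1384677046778544:ℝ[X])*X^3 + (774490323887280:ℝ[X])*X^4 + (279245112069560:ℝ[X])*X^5 + (66829936353180:ℝ[X])*X^6 + (10797646422563:ℝ[X])*X^7 + (1187885217090:ℝ[X])*X^8 + (89101070630:ℝ[X])*X^9 + (4528013490:ℝ[X])*X^10 + (153408892:ℝ[X])*X^11 + (3360630:ℝ[X])*X^12 + (45010:ℝ[X])*X^13 + (330:ℝ[X])*X^14 + X^15 := by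
  have r := recQ 1 14
  rw [Finset.sum_range_succ, Finset.sum_range_succ, Finset.sum_range_succ, Finset.sum_range_succ, Finset.sum_range_succ, Finset.sum_range_succ, Finset.sum_range_succ, Finset.sum_range_succ, Finset.sum_range_succ, Finset.sum_range_succ, Finset.sum_range_succ, Finset.sum_range_succ, Finset.sum_range_succ, Finset.sum_range_succ, Finset.sum_range_succ, Finset.sum_range_zero] at r
  norm_num [sigv1, sigv2, sigv3, sigv4, sigv5, sigv6, sigv7, sigv8, sigv9, sigv10, sigv11, sigv12, sigv13, sigv14, sigv15, Q_zero] at r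
  linear_combination (norm := (push_cast; ring1)) (87178291200:ℝ[X]) * r + ((2092278988800:ℝ[X]) * (X + 1)) * Q1_1 + ((610248038400:ℝ[X]) * (X + 1)) * Q1_2 + ((406832025600:ℝ[X]) * (X + 1)) * Q1_3 + ((43589145600:ℝ[X]) * (X + 1)) * Q1_4 + ((13076743680:ℝ[X]) * (X + 1)) * Q1_5 + ((1574052480:ℝ[X]) * (X + 1)) * Q1_6 + ((259459200:ℝ[X]) * (X + 1)) * Q1_7 + ((17297280:ℝ[X]) * (X + 1)) * Q1_8 + ((2882880:ℝ[X]) * (X + 1)) * Q1_9 + ((144144:ℝ[X]) * (X + 1)) * Q1_10 + ((15288:ℝ[X]) * (X + 1)) * Q1_11 + ((728:ℝ[X]) * (X + 1)) * Q1_12 + ((42:ℝ[X]) * (X + 1)) * Q1_13 + ((1:ℝ[X]) * (X + 1)) * Q1_14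

lemma Q1_16 : (20922789888000:ℝ[X]) * Q 1 16 = (4833164464128000:ℝ[X]) + (19784985947596800:ℝ[X])*X + (34272627010410240:ℝ[X])*X^2 + (33064642173204864:ℝ[X])*X^3 + (19738382914337424:ℝ[X])*X^4 + (7689987870131840:ℝ[X])*X^5 + (2016605456389160:ℝ[X])*X^6 + (362687978300648:ℝ[X])*X^7 + (45224035123553:ℝ[X])*X^8 + (3927511050320:ℝ[X])*X^9 + (237204856460:ℝ[X])*X^10 + (9878526112:ℝ[X])*X^11 + (278664022:ℝ[X])*X^12 + (5157040:ℝ[X])*X^13 + (59140:ℝ[X])*X^14 + (376:ℝ[X])*X^15 + X^16 := by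
  have r := recQ 1 15
  rw [Finset.sum_range_succ, Finset.sum_range_succ, Finset.sum_range_succ, Finset.sum_range_succ, Finset.sum_range_succ, Finset.sum_range_succ, Finset.sum_range_succ, Finset.sum_range_succ, Finset.sum_range_succ, Finset.sum_range_succ, Finset.sum_range_succ, Finset.sum_range_succ, Finset.sum_range_succ, Finset.sum_range_succ, Finset.sum_range_succ, Finset.sum_range_succ, Finset.sum_range_zero] at r
  norm_num [sigv1, sigv2, sigv3, sigv4, sigv5, sigv6, sigv7, sigv8, sigv9, sigv10, sigv11, sigv12, sigv13, sigv14, sigv15, sigv16, Q_zero] at r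
  linear_combination (norm := (push_cast; ring1)) (1307674368000:ℝ[X]) * r + ((31384184832000:ℝ[X]) * (X + 1)) * Q1_1 + ((15692092416000:ℝ[X]) * (X + 1)) * Q1_2 + ((3051240192000:ℝ[X]) * (X + 1)) * Q1_3 + ((1525620096000:ℝ[X]) * (X + 1)) * Q1_4 + ((130767436800:ℝ[X]) * (X + 1)) * Q1_5 + ((32691859200:ℝ[X]) * (X + 1)) * Q1_6 + ((3372969600:ℝ[X]) * (X + 1)) * Q1_7 + ((486486000:ℝ[X]) * (X + 1)) * Q1_8 + ((28828800:ℝ[X]) * (X + 1)) * Q1_9 + ((4324320:ℝ[X]) * (X + 1)) * Q1_10 + ((196560:ℝ[X]) * (X + 1)) * Q1_11 + ((19110:ℝ[X]) * (X + 1)) * Q1_12 + ((840:ℝ[X]) * (X + 1)) * Q1_13 + ((45:ℝ[X]) * (X + 1)) * Q1_14 + ((1:ℝ[X]) * (X + 1)) * Q1_15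

lemma Q1_17 : (355687428096000:ℝ[X]) * Q 1 17 = (105639166144512000:ℝ[X]) + (449672462639769600:ℝ[X])*X + (813731418889701120:ℝ[X])*X^2 + (825602592705998976:ℝ[X])*X^3 + (523007402263489680:ℝ[X])*X^4 + (218576504420594384:ℝ[X])*X^5 + (62231227323570760:ℝ[X])*X^6 + (12314826644996512:ℝ[X])*X^7 + (1715162208539065:ℝ[X])*X^8 + (169283315462833:ℝ[X])*X^9 + (11860756670620:ℝ[X])*X^10 + (587773763148:ℝ[X])*X^11 + (20392383830:ℝ[X])*X^12 + (485898182:ℝ[X])*X^13 + (7692500:ℝ[X])*X^14 + (76364:ℝ[X])*X^15 + (425:ℝ[X])*X^16 + X^17 := by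
  have r := recQ 1 16
  rw [Finset.sum_range_succ, Finset.sum_range_succ, Finset.sum_range_succ, Finset.sum_range_succ, Finset.sum_range_succ, Finset.sum_range_succ, Finset.sum_range_succ, Finset.sum_range_succ, Finset.sum_range_succ, Finset.sum_range_succ, Finset.sum_range_succ, Finset.sum_range_succ, Finset.sum_range_succ, Finset.sum_range_succ, Finset.sum_range_succ, Finset.sum_range_succ, Finset.sum_range_succ, Finset.sum_range_zero] at r
  norm_num [sigv1, sigv2, sigv3, sigv4, sigv5, sigv6, sigv7, sigv8, sigv9, sigv10, sigv11, sigv12, sigv13, sigv14, sigv15, sigv16, sigv17, Q_zero] at r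
  linear_combination (norm := (push_cast; ring1)) (20922789888000:ℝ[X]) * r + ((648606486528000:ℝ[X]) * (X + 1)) * Q1_1 + ((251073478656000:ℝ[X]) * (X + 1)) * Q1_2 + ((83691159552000:ℝ[X]) * (X + 1)) * Q1_3 + ((12204960768000:ℝ[X]) * (X + 1)) * Q1_4 + ((4881984307200:ℝ[X]) * (X + 1)) * Q1_5 + ((348713164800:ℝ[X]) * (X + 1)) * Q1_6 + ((74724249600:ℝ[X]) * (X + 1)) * Q1_7 + ((6745939200:ℝ[X]) * (X + 1)) * Q1_8 + ((864864000:ℝ[X]) * (X + 1)) * Q1_9 + ((46126080:ℝ[X]) * (X + 1)) * Q1_10 + ((6289920:ℝ[X]) * (X + 1)) * Q1_11 + ((262080:ℝ[X]) * (X + 1)) * Q1_12 + ((23520:ℝ[X]) * (X + 1)) * Q1_13 + ((960:ℝ[X]) * (X + 1)) * Q1_14 + ((48:ℝ[X]) * (X + 1)) * Q1_15 + ((1:ℝ[X]) * (X + 1)) * Q1_16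

lemma Q1_18 : (6402373705728000:ℝ[X]) * Q 1 18 = (2464913876705280000:ℝ[X]) + (10790180876185804800:ℝ[X])*X + (20257584784478530560:ℝ[X])*X^2 + (21514465738516200192:ℝ[X])*X^3 + (14394631653926870976:ℝ[X])*X^4 + (6414271800492855888:ℝ[X])*X^5 + (1967566666261014064:ℝ[X])*X^6 + (424352308591850184:ℝ[X])*X^7 + (65241489706437252:ℝ[X])*X^8 + (7211322045457101:ℝ[X])*X^9 + (575369960758593:ℝ[X])*X^10 + (33124563747756:ℝ[X])*X^11 + (1368670217668:ℝ[X])*X^12 + (40119610734:ℝ[X])*X^13 + (817513782:ℝ[X])*X^14 + (11192868:ℝ[X])*X^15 + (97104:ℝ[X])*X^16 + (477:ℝ[X])*X^17 + X^18 := by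
  have r := recQ 1 17
  rw [Finset.sum_range_succ, Finset.sum_range_succ, Finset.sum_range_succ, Finset.sum_range_succ, Finset.sum_range_succ, Finset.sum_range_succ, Finset.sum_range_succ, Finset.sum_range_succ, Finset.sum_range_succ, Finset.sum_range_succ, Finset.sum_range_succ, Finset.sum_range_succ, Finset.sum_range_succ, Finset.sum_range_succ, Finset.sum_range_succ, Finset.sum_range_succ, Finset.sum_range_succ, Finset.sum_range_succ, Finset.sum_range_zero] at r
  norm_num [sigv1, sigv2, sigv3, sigv4, sigv5, sigv6, sigv7, sigv8, sigv9, sigv10, sigv11, sigv12, sigv13, sigv14, sigv15, sigv16, sigv17, sigv18, Q_zero] at r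
  linear_combination (norm := (push_cast; ring1)) (355687428096000:ℝ[X]) * r + ((6402373705728000:ℝ[X]) * (X + 1)) * Q1_1 + ((5513155135488000:ℝ[X]) * (X + 1)) * Q1_2 + ((1422749712384000:ℝ[X]) * (X + 1)) * Q1_3 + ((355687428096000:ℝ[X]) * (X + 1)) * Q1_4 + ((41496866611200:ℝ[X]) * (X + 1)) * Q1_5 + ((13832288870400:ℝ[X]) * (X + 1)) * Q1_6 + ((846874828800:ℝ[X]) * (X + 1)) * Q1_7 + ((158789030400:ℝ[X]) * (X + 1)) * Q1_8 + ((12742329600:ℝ[X]) * (X + 1)) * Q1_9 + ((1470268800:ℝ[X]) * (X + 1)) * Q1_10 + ((71285760:ℝ[X]) * (X + 1)) * Q1_11 + ((8910720:ℝ[X]) * (X + 1)) * Q1_12 + ((342720:ℝ[X]) * (X + 1)) * Q1_13 + ((28560:ℝ[X]) * (X + 1)) * Q1_14 + ((1088:ℝ[X]) * (X + 1)) * Q1_15 + ((51:ℝ[X]) * (X + 1)) * Q1_16 + ((1:ℝ[X]) * (X + 1)) * Q1_17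

lemma Q1_19 : (121645100408832000:ℝ[X]) * Q 1 19 = (59606099200327680000:ℝ[X]) + (270071861749240320000:ℝ[X])*X + (526703252339855808000:ℝ[X])*X^2 + (584204509835864179200:ℝ[X])*X^3 + (411138986658706445472:ℝ[X])*X^4 + (194321791775331335376:ℝ[X])*X^5 + (63809509579129348048:ℝ[X])*X^6 + (14880493540012955464:ℝ[X])*X^7 + (2501076376067477754:ℝ[X])*X^8 + (305944627840400757:ℝ[X])*X^9 + (27392427212901036:ℝ[X])*X^10 + (1798527192091773:ℝ[X])*X^11 + (86418251486476:ℝ[X])*X^12 + (3018421578058:ℝ[X])*X^13 + (75668760384:ℝ[X])*X^14 + (1332857562:ℝ[X])*X^15 + (15932298:ℝ[X])*X^16 + (121809:ℝ[X])*X^17 + (532:ℝ[X])*X^18 + X^19 := by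
  have r := recQ 1 18
  rw [Finset.sum_range_succ, Finset.sum_range_succ, Finset.sum_range_succ, Finset.sum_range_succ, Finset.sum_range_succ, Finset.sum_range_succ, Finset.sum_range_succ, Finset.sum_range_succ, Finset.sum_range_succ, Finset.sum_range_succ, Finset.sum_range_succ, Finset.sum_range_succ, Finset.sum_range_succ, Finset.sum_range_succ, Finset.sum_range_succ, Finset.sum_range_succ, Finset.sum_range_succ, Finset.sum_range_succ, Finset.sum_range_succ, Finset.sum_range_zero] at r
  norm_num [sigv1, sigv2, sigv3, sigv4, sigv5, sigv6, sigv7, sigv8, sigv9, sigv10, sigv11, sigv12, sigv13, sigv14, sigv15, sigv16, sigv17, sigv18, sigv19, Q_zero] at r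
  linear_combination (norm := (push_cast; ring1)) (6402373705728000:ℝ[X]) * r + ((249692574523392000:ℝ[X]) * (X + 1)) * Q1_1 + ((57621363351552000:ℝ[X]) * (X + 1)) * Q1_2 + ((33078930812928000:ℝ[X]) * (X + 1)) * Q1_3 + ((6402373705728000:ℝ[X]) * (X + 1)) * Q1_4 + ((1280474741145600:ℝ[X]) * (X + 1)) * Q1_5 + ((124490599833600:ℝ[X]) * (X + 1)) * Q1_6 + ((35568742809600:ℝ[X]) * (X + 1)) * Q1_7 + ((1905468364800:ℝ[X]) * (X + 1)) * Q1_8 + ((317578060800:ℝ[X]) * (X + 1)) * Q1_9 + ((22936193280:ℝ[X]) * (X + 1)) * Q1_10 + ((2405894400:ℝ[X]) * (X + 1)) * Q1_11 + ((106928640:ℝ[X]) * (X + 1)) * Q1_12 + ((12337920:ℝ[X]) * (X + 1)) * Q1_13 + ((440640:ℝ[X]) * (X + 1)) * Q1_14 + ((34272:ℝ[X]) * (X + 1)) * Q1_15 + ((1224:ℝ[X]) * (X + 1)) * Q1_16 + ((54:ℝ[X]) * (X + 1)) * Q1_17 + ((1:ℝ[X]) * (X + 1)) * Q1_18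

lemma Q1_20 : (2432902008176640000:ℝ[X]) * Q 1 20 = (1525429559126753280000:ℝ[X]) + (7094011359005190144000:ℝ[X])*X + (14297851699552924416000:ℝ[X])*X^2 + (16504088010283159534080:ℝ[X])*X^3 + (12173472937427557574016:ℝ[X])*X^4 + (6075862559641849692960:ℝ[X])*X^5 + (2124056448637241606320:ℝ[X])*X^6 + (532019020241236835120:ℝ[X])*X^7 + (96969346810593855376:ℝ[X])*X^8 + (12999444587214400770:ℝ[X])*X^9 + (1290620989042420815:ℝ[X])*X^10 + (95237305283035110:ℝ[X])*X^11 + (5224670507393701:ℝ[X])*X^12 + (212360600182580:ℝ[X])*X^13 + (6345311475910:ℝ[X])*X^14 + (137489375100:ℝ[X])*X^15 + (2113266906:ℝ[X])*X^16 + (22239690:ℝ[X])*X^17 + (150955:ℝ[X])*X^18 + (590:ℝ[X])*X^19 + X^20 := by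
  have r := recQ 1 19
  rw [Finset.sum_range_succ, Finset.sum_range_succ, Finset.sum_range_succ, Finset.sum_range_succ, Finset.sum_range_succ, Finset.sum_range_succ, Finset.sum_range_succ, Finset.sum_range_succ, Finset.sum_range_succ, Finset.sum_range_succ, Finset.sum_range_succ, Finset.sum_range_succ, Finset.sum_range_succ, Finset.sum_range_succ, Finset.sum_range_succ, Finset.sum_range_succ, Finset.sum_range_succ, Finset.sum_range_succ, Finset.sum_range_succ, Finset.sum_range_succ, Finset.sum_range_zero] at r
  norm_num [sigv1, sigv2, sigv3, sigv4, sigv5, sigv6, sigv7, sigv8, sigv9, sigv10, sigv11, sigv12, sigv13, sigv14, sigv15, sigv16, sigv17, sigv18, sigv19, sigv20, Q_zero] at r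
  linear_combination (norm := (push_cast; ring1)) (121645100408832000:ℝ[X]) * r + ((2432902008176640000:ℝ[X]) * (X + 1)) * Q1_1 + ((2372079457972224000:ℝ[X]) * (X + 1)) * Q1_2 + ((364935301226496000:ℝ[X]) * (X + 1)) * Q1_3 + ((157124921361408000:ℝ[X]) * (X + 1)) * Q1_4 + ((24329020081766400:ℝ[X]) * (X + 1)) * Q1_5 + ((4054836680294400:ℝ[X]) * (X + 1)) * Q1_6 + ((337903056691200:ℝ[X]) * (X + 1)) * Q1_7 + ((84475764172800:ℝ[X]) * (X + 1)) * Q1_8 + ((4022655436800:ℝ[X]) * (X + 1)) * Q1_9 + ((603398315520:ℝ[X]) * (X + 1)) * Q1_10 + ((39617061120:ℝ[X]) * (X + 1)) * Q1_11 + ((3809332800:ℝ[X]) * (X + 1)) * Q1_12 + ((156280320:ℝ[X]) * (X + 1)) * Q1_13 + ((16744320:ℝ[X]) * (X + 1)) * Q1_14 + ((558144:ℝ[X]) * (X + 1)) * Q1_15 + ((40698:ℝ[X]) * (X + 1)) * Q1_16 + ((1368:ℝ[X]) * (X + 1)) * Q1_17 + ((57:ℝ[X]) * (X + 1)) * Q1_18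 + ((1:ℝ[X]) * (X + 1)) * Q1_19

lemma Q2_0 : (1:ℝ[X]) * Q 2 0 = (1:ℝ[X]) := by rw [Q_zero]; norm_num

lemma Q2_1 : (1:ℝ[X]) * Q 2 1 = (2:ℝ[X]) + X := by
  have r := recQ 2 0
  rw [Finset.sum_range_succ, Finset.sum_range_zero] at r
  norm_num [sigv1, Q_zero] at r
  linear_combination (norm := (push_cast; ring1)) (1:ℝ[X]) * r

lemma Q2_2 : (2:ℝ[X]) * Q 2 2 = (10:ℝ[X]) + (7:ℝ[X])*X + X^2 := by
  have r := recQ 2 1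
  rw [Finset.sum_range_succ, Finset.sum_range_succ, Finset.sum_range_zero] at r
  norm_num [sigv1, sigv2, Q_zero] at r
  linear_combination (norm := (push_cast; ring1)) (1:ℝ[X]) * r + ((1:ℝ[X]) * (X + 2)) * Q2_1

lemma Q2_3 : (6:ℝ[X]) * Q 2 3 = (60:ℝ[X]) + (56:ℝ[X])*X + (15:ℝ[X])*X^2 + X^3 := by
  have r := recQ 2 2
  rw [Finset.sum_range_succ, Finset.sum_range_succ, Finset.sum_range_succ, Finset.sum_range_zero] at r
  norm_num [sigv1, sigv2, sigv3, Q_zero] at r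
  linear_combination (norm := (push_cast; ring1)) (2:ℝ[X]) * r + ((6:ℝ[X]) * (X + 2)) * Q2_1 + ((1:ℝ[X]) * (X + 2)) * Q2_2

lemma Q2_4 : (24:ℝ[X]) * Q 2 4 = (480:ℝ[X]) + (526:ℝ[X])*X + (191:ℝ[X])*X^2 + (26:ℝ[X])*X^3 + X^4 := by
  have r := recQ 2 3
  rw [Finset.sum_range_succ, Finset.sum_range_succ, Finset.sum_range_succ, Finset.sum_range_succ, Finset.sum_range_zero] at r
  norm_num [sigv1, sigv2, sigv3, sigv4, Q_zero] at r
  linear_combination (norm := (push_cast; ring1)) (6:ℝ[X]) * r + ((24:ℝ[X]) * (X + 2)) * Q2_1 + ((9:ℝ[X]) * (X + 2)) * Q2_2 + ((1:ℝ[X]) * (X + 2)) * Q2_3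

lemma Q2_5 : (120:ℝ[X]) * Q 2 5 = (4320:ℝ[X]) + (5564:ℝ[X])*X + (2540:ℝ[X])*X^2 + (495:ℝ[X])*X^3 + (40:ℝ[X])*X^4 + X^5 := by
  have r := recQ 2 4
  rw [Finset.sum_range_succ, Finset.sum_range_succ, Finset.sum_range_succ, Finset.sum_range_succ, Finset.sum_range_succ, Finset.sum_range_zero] at r
  norm_num [sigv1, sigv2, sigv3, sigv4, sigv5, Q_zero] at r
  linear_combination (norm := (push_cast; ring1)) (24:ℝ[X]) * r + ((168:ℝ[X]) * (X + 2)) * Q2_1 + ((48:ℝ[X]) * (X + 2)) * Q2_2 + ((12:ℝ[X]) * (X + 2)) * Q2_3 + ((1:ℝ[X]) * (X + 2)) * Q2_4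

lemma Q2_6 : (720:ℝ[X]) * Q 2 6 = (46800:ℝ[X]) + (66588:ℝ[X])*X + (35644:ℝ[X])*X^2 + (8955:ℝ[X])*X^3 + (1075:ℝ[X])*X^4 + (57:ℝ[X])*X^5 + X^6 := by
  have r := recQ 2 5
  rw [Finset.sum_range_succ, Finset.sum_range_succ, Finset.sum_range_succ, Finset.sum_range_succ, Finset.sum_range_succ, Finset.sum_range_succ, Finset.sum_range_zero] at r
  norm_num [sigv1, sigv2, sigv3, sigv4, sigv5, sigv6, Q_zero] at r
  linear_combination (norm := (push_cast; ring1)) (120:ℝ[X]) * r + ((720:ℝ[X]) * (X + 2)) * Q2_1 + ((420:ℝ[X]) * (X + 2)) * Q2_2 + ((80:ℝ[X]) * (X + 2)) * Q2_3 + ((15:ℝ[X]) * (X + 2)) * Q2_4 + ((1:ℝ[X]) * (X + 2)) * Q2_5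

lemma Q2_7 : (5040:ℝ[X]) * Q 2 7 = (554400:ℝ[X]) + (878520:ℝ[X])*X + (538748:ℝ[X])*X^2 + (162694:ℝ[X])*X^3 + (25655:ℝ[X])*X^4 + (2065:ℝ[X])*X^5 + (77:ℝ[X])*X^6 + X^7 := by
  have r := recQ 2 6
  rw [Finset.sum_range_succ, Finset.sum_range_succ, Finset.sum_range_succ, Finset.sum_range_succ, Finset.sum_range_succ, Finset.sum_range_succ, Finset.sum_range_succ, Finset.sum_range_zero] at r
  norm_num [sigv1, sigv2, sigv3, sigv4, sigv5, sigv6, sigv7, Q_zero] at r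
  linear_combination (norm := (push_cast; ring1)) (720:ℝ[X]) * r + ((8640:ℝ[X]) * (X + 2)) * Q2_1 + ((2160:ℝ[X]) * (X + 2)) * Q2_2 + ((840:ℝ[X]) * (X + 2)) * Q2_3 + ((120:ℝ[X]) * (X + 2)) * Q2_4 + ((18:ℝ[X]) * (X + 2)) * Q2_5 + ((1:ℝ[X]) * (X + 2)) * Q2_6

lemma Q2_8 : (40320:ℝ[X]) * Q 2 8 = (7459200:ℝ[X]) + (12767760:ℝ[X])*X + (8720284:ℝ[X])*X^2 + (3054940:ℝ[X])*X^3 + (590009:ℝ[X])*X^4 + (63280:ℝ[X])*X^5 + (3626:ℝ[X])*X^6 + (100:ℝ[X])*X^7 + X^8 := by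
  have r := recQ 2 7
  rw [Finset.sum_range_succ, Finset.sum_range_succ, Finset.sum_range_succ, Finset.sum_range_succ, Finset.sum_range_succ, Finset.sum_range_succ, Finset.sum_range_succ, Finset.sum_range_succ, Finset.sum_range_zero] at r
  norm_num [sigv1, sigv2, sigv3, sigv4, sigv5, sigv6, sigv7, sigv8, Q_zero] at r
  linear_combination (norm := (push_cast; ring1)) (5040:ℝ[X]) * r + ((40320:ℝ[X]) * (X + 2)) * Q2_1 + ((30240:ℝ[X]) * (X + 2)) * Q2_2 + ((5040:ℝ[X]) * (X + 2)) * Q2_3 + ((1470:ℝ[X]) * (X + 2)) * Q2_4 + ((168:ℝ[X]) * (X + 2)) * Q2_5 + ((21:ℝ[X]) * (X + 2)) * Q2_6 + ((1:ℝ[X]) * (X + 2)) * Q2_7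

lemma Q2_9 : (362880:ℝ[X]) * Q 2 9 = (108864000:ℝ[X]) + (201244320:ℝ[X])*X + (151215624:ℝ[X])*X^2 + (59849684:ℝ[X])*X^3 + (13573854:ℝ[X])*X^4 + (1806609:ℝ[X])*X^5 + (139356:ℝ[X])*X^6 + (5946:ℝ[X])*X^7 + (126:ℝ[X])*X^8 + X^9 := by
  have r := recQ 2 8
  rw [Finset.sum_range_succ, Finset.sum_range_succ, Finset.sum_range_succ, Finset.sum_range_succ, Finset.sum_range_succ, Finset.sum_range_succ, Finset.sum_range_succ, Finset.sum_range_succ, Finset.sum_range_succ, Finset.sum_range_zero] at r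
  norm_num [sigv1, sigv2, sigv3, sigv4, sigv5, sigv6, sigv7, sigv8, sigv9, Q_zero] at r
  linear_combination (norm := (push_cast; ring1)) (40320:ℝ[X]) * r + ((604800:ℝ[X]) * (X + 2)) * Q2_1 + ((161280:ℝ[X]) * (X + 2)) * Q2_2 + ((80640:ℝ[X]) * (X + 2)) * Q2_3 + ((10080:ℝ[X]) * (X + 2)) * Q2_4 + ((2352:ℝ[X]) * (X + 2)) * Q2_5 + ((224:ℝ[X]) * (X + 2)) * Q2_6 + ((24:ℝ[X]) * (X + 2)) * Q2_7 + ((1:ℝ[X]) * (X + 2)) * Q2_8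

lemma Q2_10 : (3628800:ℝ[X]) * Q 2 10 = (1745452800:ℝ[X]) + (3435055200:ℝ[X])*X + (2797753896:ℝ[X])*X^2 + (1228224220:ℝ[X])*X^3 + (318149810:ℝ[X])*X^4 + (50250795:ℝ[X])*X^5 + (4855053:ℝ[X])*X^6 + (280830:ℝ[X])*X^7 + (9240:ℝ[X])*X^8 + (155:ℝ[X])*X^9 + X^10 := by
  have r := recQ 2 9
  rw [Finset.sum_range_succ, Finset.sum_range_succ, Finset.sum_range_succ, Finset.sum_range_succ, Finset.sum_range_succ, Finset.sum_range_succ, Finset.sum_range_succ, Finset.sum_range_succ, Finset.sum_range_succ, Finset.sum_range_succ, Finset.sum_range_zero] at r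
  norm_num [sigv1, sigv2, sigv3, sigv4, sigv5, sigv6, sigv7, sigv8, sigv9, sigv10, Q_zero] at r
  linear_combination (norm := (push_cast; ring1)) (362880:ℝ[X]) * r + ((4717440:ℝ[X]) * (X + 2)) * Q2_1 + ((2721600:ℝ[X]) * (X + 2)) * Q2_2 + ((483840:ℝ[X]) * (X + 2)) * Q2_3 + ((181440:ℝ[X]) * (X + 2)) * Q2_4 + ((18144:ℝ[X]) * (X + 2)) * Q2_5 + ((3528:ℝ[X]) * (X + 2)) * Q2_6 + ((288:ℝ[X]) * (X + 2)) * Q2_7 + ((27:ℝ[X]) * (X + 2)) * Q2_8 + ((1:ℝ[X]) * (X + 2)) * Q2_9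

lemma Q2_11 : (39916800:ℝ[X]) * Q 2 11 = (30017433600:ℝ[X]) + (62816546880:ℝ[X])*X + (55062125712:ℝ[X])*X^2 + (26447939936:ℝ[X])*X^3 + (7665022640:ℝ[X])*X^4 + (1394750720:ℝ[X])*X^5 + (161242851:ℝ[X])*X^6 + (11759913:ℝ[X])*X^7 + (527010:ℝ[X])*X^8 + (13750:ℝ[X])*X^9 + (187:ℝ[X])*X^10 + X^11 := by
  have r := recQ 2 10
  rw [Finset.sum_range_succ, Finset.sum_range_succ, Finset.sum_range_succ, Finset.sum_range_succ, Finset.sum_range_succ, Finset.sum_range_succ, Finset.sum_range_succ, Finset.sum_range_succ, Finset.sum_range_succ, Finset.sum_range_succ, Finset.sum_range_succ, Finset.sum_range_zero] at r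
  norm_num [sigv1, sigv2, sigv3, sigv4, sigv5, sigv6, sigv7, sigv8, sigv9, sigv10, sigv11, Q_zero] at r
  linear_combination (norm := (push_cast; ring1)) (3628800:ℝ[X]) * r + ((65318400:ℝ[X]) * (X + 2)) * Q2_1 + ((23587200:ℝ[X]) * (X + 2)) * Q2_2 + ((9072000:ℝ[X]) * (X + 2)) * Q2_3 + ((1209600:ℝ[X]) * (X + 2)) * Q2_4 + ((362880:ℝ[X]) * (X + 2)) * Q2_5 + ((30240:ℝ[X]) * (X + 2)) * Q2_6 + ((5040:ℝ[X]) * (X + 2)) * Q2_7 + ((360:ℝ[X]) * (X + 2)) * Q2_8 + ((30:ℝ[X]) * (X + 2)) * Q2_9 + ((1:ℝ[X]) * (X + 2)) * Q2_10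

lemma Q2_12 : (479001600:ℝ[X]) * Q 2 12 = (558036864000:ℝ[X]) + (1229047430400:ℝ[X])*X + (1148714203680:ℝ[X])*X^2 + (597300101112:ℝ[X])*X^3 + (190806962236:ℝ[X])*X^4 + (39141271290:ℝ[X])*X^5 + (5249633675:ℝ[X])*X^6 + (460996866:ℝ[X])*X^7 + (26172663:ℝ[X])*X^8 + (932910:ℝ[X])*X^9 + (19745:ℝ[X])*X^10 + (222:ℝ[X])*X^11 + X^12 := by
  have r := recQ 2 11
  rw [Finset.sum_range_succ, Finset.sum_range_succ, Finset.sum_range_succ, Finset.sum_range_succ, Finset.sum_range_succ, Finset.sum_range_succ, Finset.sum_range_succ, Finset.sum_range_succ, Finset.sum_range_succ, Finset.sum_range_succ, Finset.sum_range_succ, Finset.sum_range_succ, Finset.sum_range_zero] at r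
  norm_num [sigv1, sigv2, sigv3, sigv4, sigv5, sigv6, sigv7, sigv8, sigv9, sigv10, sigv11, sigv12, Q_zero] at r
  linear_combination (norm := (push_cast; ring1)) (39916800:ℝ[X]) * r + ((479001600:ℝ[X]) * (X + 2)) * Q2_1 + ((359251200:ℝ[X]) * (X + 2)) * Q2_2 + ((86486400:ℝ[X]) * (X + 2)) * Q2_3 + ((24948000:ℝ[X]) * (X + 2)) * Q2_4 + ((2661120:ℝ[X]) * (X + 2)) * Q2_5 + ((665280:ℝ[X]) * (X + 2)) * Q2_6 + ((47520:ℝ[X]) * (X + 2)) * Q2_7 + ((6930:ℝ[X]) * (X + 2)) * Q2_8 + ((440:ℝ[X]) * (X + 2)) * Q2_9 + ((33:ℝ[X]) * (X + 2)) * Q2_10 + ((1:ℝ[X]) * (X + 2)) * Q2_11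

lemma Q2_13 : (6227020800:ℝ[X]) * Q 2 13 = (11021826816000:ℝ[X]) + (25538295513600:ℝ[X])*X + (25328061120960:ℝ[X])*X^2 + (14136638255376:ℝ[X])*X^3 + (4919414648720:ℝ[X])*X^4 + (1119457452256:ℝ[X])*X^5 + (170320905040:ℝ[X])*X^6 + (17448777203:ℝ[X])*X^7 + (1198360020:ℝ[X])*X^8 + (54297243:ℝ[X])*X^9 + (1573000:ℝ[X])*X^10 + (27521:ℝ[X])*X^11 + (260:ℝ[X])*X^12 + X^13 := by
  have r := recQ 2 12
  rw [Finset.sum_range_succ, Finset.sum_range_succ, Finset.sum_range_succ, Finset.sum_range_succ, Finset.sum_range_succ, Finset.sum_range_succ, Finset.sum_range_succ, Finset.sum_range_succ, Finset.sum_range_succ, Finset.sum_range_succ, Finset.sum_range_succ, Finset.sum_range_succ, Finset.sum_range_succ, Finset.sum_range_zero] at r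
  norm_num [sigv1, sigv2, sigv3, sigv4, sigv5, sigv6, sigv7, sigv8, sigv9, sigv10, sigv11, sigv12, sigv13, Q_zero] at r
  linear_combination (norm := (push_cast; ring1)) (479001600:ℝ[X]) * r + ((13412044800:ℝ[X]) * (X + 2)) * Q2_1 + ((2874009600:ℝ[X]) * (X + 2)) * Q2_2 + ((1437004800:ℝ[X]) * (X + 2)) * Q2_3 + ((259459200:ℝ[X]) * (X + 2)) * Q2_4 + ((59875200:ℝ[X]) * (X + 2)) * Q2_5 + ((5322240:ℝ[X]) * (X + 2)) * Q2_6 + ((1140480:ℝ[X]) * (X + 2)) * Q2_7 + ((71280:ℝ[X]) * (X + 2)) * Q2_8 + ((9240:ℝ[X]) * (X + 2)) * Q2_9 + ((528:ℝ[X]) * (X + 2)) * Q2_10 + ((36:ℝ[X]) * (X + 2)) * Q2_11 + ((1:ℝ[X]) * (X + 2)) * Q2_12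

lemma Q2_14 : (87178291200:ℝ[X]) * Q 2 14 = (232330146048000:ℝ[X]) + (562644318700800:ℝ[X])*X + (588544065601920:ℝ[X])*X^2 + (350151612881616:ℝ[X])*X^3 + (131512062101056:ℝ[X])*X^4 + (32784519223456:ℝ[X])*X^5 + (5563567925916:ℝ[X])*X^6 + (649843116923:ℝ[X])*X^7 + (52294113443:ℝ[X])*X^8 + (2876216343:ℝ[X])*X^9 + (106169063:ℝ[X])*X^10 + (2545361:ℝ[X])*X^11 + (37401:ℝ[X])*X^12 + (301:ℝ[X])*X^13 + X^14 := by
  have r := recQ 2 13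
  rw [Finset.sum_range_succ, Finset.sum_range_succ, Finset.sum_range_succ, Finset.sum_range_succ, Finset.sum_range_succ, Finset.sum_range_succ, Finset.sum_range_succ, Finset.sum_range_succ, Finset.sum_range_succ, Finset.sum_range_succ, Finset.sum_range_succ, Finset.sum_range_succ, Finset.sum_range_succ, Finset.sum_range_succ, Finset.sum_range_zero] at r
  norm_num [sigv1, sigv2, sigv3, sigv4, sigv5, sigv6, sigv7, sigv8, sigv9, sigv10, sigv11, sigv12, sigv13, sigv14, Q_zero] at r
  linear_combination (norm := (push_cast; ring1)) (6227020800:ℝ[X]) * r + ((87178291200:ℝ[X]) * (X + 2)) * Q2_1 + ((87178291200:ℝ[X]) * (X + 2)) * Q2_2 + ((12454041600:ℝ[X]) * (X + 2)) * Q2_3 + ((4670265600:ℝ[X]) * (X + 2)) * Q2_4 + ((674593920:ℝ[X]) * (X + 2)) * Q2_5 + ((129729600:ℝ[X]) * (X + 2)) * Q2_6 + ((9884160:ℝ[X]) * (X + 2)) * Q2_7 + ((1853280:ℝ[X]) * (X + 2)) * Q2_8 + ((102960:ℝ[X]) * (X + 2)) * Q2_9 + ((12012:ℝ[X]) * (X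 + 2)) * Q2_10 + ((624:ℝ[X]) * (X + 2)) * Q2_11 + ((39:ℝ[X]) * (X + 2)) * Q2_12 + ((1:ℝ[X]) * (X + 2)) * Q2_13

lemma Q2_15 : (1307674368000:ℝ[X]) * Q 2 15 = (5173159799808000:ℝ[X]) + (13074737047948800:ℝ[X])*X + (14373221206890240:ℝ[X])*X^2 + (9064181303384544:ℝ[X])*X^3 + (3646464458211120:ℝ[X])*X^4 + (985938266636960:ℝ[X])*X^5 + (184183678518840:ℝ[X])*X^6 + (24105093250238:ℝ[X])*X^7 + (2220590364135:ℝ[X])*X^8 + (143590881005:ℝ[X])*X^9 + (6450519075:ℝ[X])*X^10 + (197368717:ℝ[X])*X^11 + (3976245:ℝ[X])*X^12 + (49735:ℝ[X])*X^13 + (345:ℝ[X])*X^14 + X^15 := by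
  have r := recQ 2 14
  rw [Finset.sum_range_succ, Finset.sum_range_succ, Finset.sum_range_succ, Finset.sum_range_succ, Finset.sum_range_succ, Finset.sum_range_succ, Finset.sum_range_succ, Finset.sum_range_succ, Finset.sum_range_succ, Finset.sum_range_succ, Finset.sum_range_succ, Finset.sum_range_succ, Finset.sum_range_succ, Finset.sum_range_succ, Finset.sum_range_succ, Finset.sum_range_zero] at r
  norm_num [sigv1, sigv2, sigv3, sigv4, sigv5, sigv6, sigv7, sigv8, sigv9, sigv10, sigv11, sigv12, sigv13, sigv14, sigv15, Q_zero] at r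
  linear_combination (norm := (push_cast; ring1)) (87178291200:ℝ[X]) * r + ((2092278988800:ℝ[X]) * (X + 2)) * Q2_1 + ((610248038400:ℝ[X]) * (X + 2)) * Q2_2 + ((406832025600:ℝ[X]) * (X + 2)) * Q2_3 + ((43589145600:ℝ[X]) * (X + 2)) * Q2_4 + ((13076743680:ℝ[X]) * (X + 2)) * Q2_5 + ((1574052480:ℝ[X]) * (X + 2)) * Q2_6 + ((259459200:ℝ[X]) * (X + 2)) * Q2_7 + ((17297280:ℝ[X]) * (X + 2)) * Q2_8 + ((2882880:ℝ[X]) * (X + 2)) * Q2_9 + ((144144:ℝ[X]) * (X + 2)) * Q2_10 + ((15288:ℝ[X]) * (X + 2)) * Q2_11 + ((728:ℝ[X]) * (X + 2)) * Q2_12 + ((42:ℝ[X]) * (X + 2)) * Q2_13 + ((1:ℝ[X]) * (X + 2)) * Q2_14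

lemma Q2_16 : (20922789888000:ℝ[X]) * Q 2 16 = (121812482727936000:ℝ[X]) + (319965710087116800:ℝ[X])*X + (368081158825762560:ℝ[X])*X^2 + (244836855137605248:ℝ[X])*X^3 + (104845246821507984:ℝ[X])*X^4 + (30498047473479040:ℝ[X])*X^5 + (6206248629624680:ℝ[X])*X^6 + (897824910278296:ℝ[X])*X^7 + (93020565756833:ℝ[X])*X^8 + (6907992211120:ℝ[X])*X^9 + (365795718860:ℝ[X])*X^10 + (13646788064:ℝ[X])*X^11 + (351260182:ℝ[X])*X^12 + (6025040:ℝ[X])*X^13 + (64900:ℝ[X])*X^14 + (392:ℝ[X])*X^15 + X^16 := by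
  have r := recQ 2 15
  rw [Finset.sum_range_succ, Finset.sum_range_succ, Finset.sum_range_succ, Finset.sum_range_succ, Finset.sum_range_succ, Finset.sum_range_succ, Finset.sum_range_succ, Finset.sum_range_succ, Finset.sum_range_succ, Finset.sum_range_succ, Finset.sum_range_succ, Finset.sum_range_succ, Finset.sum_range_succ, Finset.sum_range_succ, Finset.sum_range_succ, Finset.sum_range_succ, Finset.sum_range_zero] at r
  norm_num [sigv1, sigv2, sigv3, sigv4, sigv5, sigv6, sigv7, sigv8, sigv9, sigv10, sigv11, sigv12, sigv13, sigv14, sigv15, sigv16, Q_zero] at r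
  linear_combination (norm := (push_cast; ring1)) (1307674368000:ℝ[X]) * r + ((31384184832000:ℝ[X]) * (X + 2)) * Q2_1 + ((15692092416000:ℝ[X]) * (X + 2)) * Q2_2 + ((3051240192000:ℝ[X]) * (X + 2)) * Q2_3 + ((1525620096000:ℝ[X]) * (X + 2)) * Q2_4 + ((130767436800:ℝ[X]) * (X + 2)) * Q2_5 + ((32691859200:ℝ[X]) * (X + 2)) * Q2_6 + ((3372969600:ℝ[X]) * (X + 2)) * Q2_7 + ((486486000:ℝ[X]) * (X + 2)) * Q2_8 + ((28828800:ℝ[X]) * (X + 2)) * Q2_9 + ((4324320:ℝ[X]) * (X + 2)) * Q2_10 + ((196560:ℝ[X]) * (X + 2)) * Q2_11 + ((19110:ℝ[X]) * (X + 2)) * Q2_12 + ((840:ℝ[X]) * (X + 2)) * Q2_13 + ((45:ℝ[X]) * (X + 2)) * Q2_14 + ((1:ℝ[X]) * (X + 2)) * Q2_15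

lemma Q2_17 : (355687428096000:ℝ[X]) * Q 2 17 = (3012672515973120000:ℝ[X]) + (8213816531870208000:ℝ[X])*X + (9861114611501452800:ℝ[X])*X^2 + (6890834508787031040:ℝ[X])*X^3 + (3124463492836022688:ℝ[X])*X^4 + (971231263243543184:ℝ[X])*X^5 + (213461364406057040:ℝ[X])*X^6 + (33764591278501720:ℝ[X])*X^7 + (3880171947231866:ℝ[X])*X^8 + (325067968258033:ℝ[X])*X^9 + (19819065214520:ℝ[X])*X^10 + (873288602940:ℝ[X])*X^11 + (27444603004:ℝ[X])*X^12 + (601851782:ℝ[X])*X^13 + (8889640:ℝ[X])*X^14 + (83300:ℝ[X])*X^15 + (442:ℝ[X])*X^16 + X^17 := by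
  have r := recQ 2 16
  rw [Finset.sum_range_succ, Finset.sum_range_succ, Finset.sum_range_succ, Finset.sum_range_succ, Finset.sum_range_succ, Finset.sum_range_succ, Finset.sum_range_succ, Finset.sum_range_succ, Finset.sum_range_succ, Finset.sum_range_succ, Finset.sum_range_succ, Finset.sum_range_succ, Finset.sum_range_succ, Finset.sum_range_succ, Finset.sum_range_succ, Finset.sum_range_succ, Finset.sum_range_succ, Finset.sum_range_zero] at r
  norm_num [sigv1, sigv2, sigv3, sigv4, sigv5, sigv6, sigv7, sigv8, sigv9, sigv10, sigv11, sigv12, sigv13, sigv14, sigv15, sigv16, sigv17, Q_zero] at r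
  linear_combination (norm := (push_cast; ring1)) (20922789888000:ℝ[X]) * r + ((648606486528000:ℝ[X]) * (X + 2)) * Q2_1 + ((251073478656000:ℝ[X]) * (X + 2)) * Q2_2 + ((83691159552000:ℝ[X]) * (X + 2)) * Q2_3 + ((12204960768000:ℝ[X]) * (X + 2)) * Q2_4 + ((4881984307200:ℝ[X]) * (X + 2)) * Q2_5 + ((348713164800:ℝ[X]) * (X + 2)) * Q2_6 + ((74724249600:ℝ[X]) * (X + 2)) * Q2_7 + ((6745939200:ℝ[X]) * (X + 2)) * Q2_8 + ((864864000:ℝ[X]) * (X + 2)) * Q2_9 + ((46126080:ℝ[X]) * (X + 2)) * Q2_10 + ((6289920:ℝ[X]) * (X + 2)) * Q2_11 + ((262080:ℝ[X]) * (X + 2)) * Q2_12 + ((23520:ℝ[X]) * (X + 2)) * Q2_13 + ((960:ℝ[X]) * (X + 2)) * Q2_14 + ((48:ℝ[X]) * (X + 2)) * Q2_15 + ((1:ℝ[X]) * (X + 2)) * Q2_16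
lemma keyU_1 : ((1:ℕ):ℝ[X]) * U 1 1 = ofL [1, 0, 3, 1] + ((3:ℕ):ℝ[X]) * X := by
  unfold U
  linear_combination (norm := (simp only [ofL_cons, ofL_nil, Nat.reduceAdd, Nat.reduceMul]; push_cast; ring1)) ((1:ℝ[X]) * (X + 1)^2) * Q1_1

lemma base2_1_4 : nng (((2:ℕ):ℝ[X]) * Eo 1 1 4 - ((1*(4+1):ℕ):ℝ[X]) * U 1 1) := by
  apply nng_descale (N := 240) (by norm_num)
  refine nng_congr (q := ofL [240, 504, 864, 1290, 810, 126, 6]) ?_ (nng_ofL _)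
  unfold Eo U
  linear_combination (norm := (simp only [ofL_cons, ofL_nil, Nat.reduceAdd, Nat.reduceMul]; push_cast; ring1)) ((10:ℝ[X]) * ((2:ℝ[X]) * Q 1 2)) * Q1_4 + ((10:ℝ[X]) * ((120:ℝ[X]) + (218:ℝ[X])*X + (119:ℝ[X])*X^2 + (22:ℝ[X])*X^3 + X^4)) * Q1_2 + ((-4:ℝ[X]) * ((1:ℝ[X]) * Q 1 1)) * Q1_5 + ((-4:ℝ[X]) * ((840:ℝ[X]) + (1814:ℝ[X])*X + (1285:ℝ[X])*X^2 + (345:ℝ[X])*X^3 + (35:ℝ[X])*X^4 + X^5)) * Q1_1 + ((-1200:ℝ[X]) * (X + 1)^2) * Q1_1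

lemma base2_1_5 : nng (((2:ℕ):ℝ[X]) * Eo 1 1 5 - ((1*(5+1):ℕ):ℝ[X]) * U 1 1) := by
  apply nng_descale (N := 1440) (by norm_num)
  refine nng_congr (q := ofL [0, 7296, 23408, 27272, 13760, 2864, 272, 8]) ?_ (nng_ofL _)
  unfold Eo U
  linear_combination (norm := (simp only [ofL_cons, ofL_nil, Nat.reduceAdd, Nat.reduceMul]; push_cast; ring1)) ((12:ℝ[X]) * ((2:ℝ[X]) * Q 1 2)) * Q1_5 + ((12:ℝ[X]) * ((840:ℝ[X]) + (1814:ℝ[X])*X + (1285:ℝ[X])*X^2 + (345:ℝ[X])*X^3 + (35:ℝ[X])*X^4 + X^5)) * Q1_2 + ((-4:ℝ[X]) * ((1:ℝ[X]) * Q 1 1)) * Q1_6 + ((-4:ℝ[X]) * ((7920:ℝ[X]) + (18144:ℝ[X])*X + (14674:ℝ[X])*X^2 + (5205:ℝ[X])*X^3 + (805:ℝ[X])*X^4 + (51:ℝ[X])*X^5 + X^6)) * Q1_1 + ((-8640:ℝ[X]) * (X + 1)^2) * Q1_1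

lemma base2_1_6 : nng (((2:ℕ):ℝ[X]) * Eo 1 1 6 - ((1*(6+1):ℕ):ℝ[X]) * U 1 1) := by
  apply nng_descale (N := 10080) (by norm_num)
  refine nng_congr (q := ofL [70560, 270960, 465280, 444920, 232190, 59780, 8120, 500, 10]) ?_ (nng_ofL _)
  unfold Eo U
  linear_combination (norm := (simp only [ofL_cons, ofL_nil, Nat.reduceAdd, Nat.reduceMul]; push_cast; ring1)) ((14:ℝ[X]) * ((2:ℝ[X]) * Q 1 2)) * Q1_6 + ((14:ℝ[X]) * ((7920:ℝ[X]) + (18144:ℝ[X])*X + (14674:ℝ[X])*X^2 + (5205:ℝ[X])*X^3 + (805:ℝ[X])*X^4 + (51:ℝ[X])*X^5 + X^6)) * Q1_2 + ((-4:ℝ[X]) * ((1:ℝ[X]) * Q 1 1)) * Q1_7 + ((-4:ℝ[X]) * ((75600:ℝ[X]) + (196356:ℝ[X])*X + (185080:ℝ[X])*X^2 + (79219:ℝ[X])*X^3 + (16450:ℝ[X])*X^4 + (1624:ℝ[X])*X^5 + (70:ℝ[X])*X^6 + X^7)) * Q1_1 + ((-70560:ℝ[X]) * (X + 1)^2) *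 Q1_1

lemma base2_1_7 : nng (((2:ℕ):ℝ[X]) * Eo 1 1 7 - ((1*(7+1):ℕ):ℝ[X]) * U 1 1) := by
  apply nng_descale (N := 80640) (by norm_num)
  refine nng_congr (q := ofL [645120, 3422016, 7058448, 7278336, 4018812, 1214892, 211512, 19464, 828, 12]) ?_ (nng_ofL _)
  unfold Eo U
  linear_combination (norm := (simp only [ofL_cons, ofL_nil, Nat.reduceAdd, Nat.reduceMul]; push_cast; ring1)) ((16:ℝ[X]) * ((2:ℝ[X]) * Q 1 2)) * Q1_7 + ((16:ℝ[X]) * ((75600:ℝ[X]) + (196356:ℝ[X])*X + (185080:ℝ[X])*X^2 + (79219:ℝ[X])*X^3 + (16450:ℝ[X])*X^4 + (1624:ℝ[X])*X^5 + (70:ℝ[X])*X^6 + X^7)) * Q1_2 + ((-4:ℝ[X]) * ((1:ℝ[X]) * Q 1 1)) * Q1_8 + ((-4:ℝ[X]) * ((887040:ℝ[X]) + (2427312:ℝ[X])*X + (2515036:ℝ[X])*X^2 + (1258628:ℝ[X])*X^3 + (324569:ℝ[X])*X^4 + (43568:ℝ[X])*X^5 + (2954:ℝ[X])*X^6 + (92:ℝ[X])*X^7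 + X^8)) * Q1_1 + ((-645120:ℝ[X]) * (X + 1)^2) * Q1_1

lemma base2_1_8 : nng (((2:ℕ):ℝ[X]) * Eo 1 1 8 - ((1*(8+1):ℕ):ℝ[X]) * U 1 1) := by
  apply nng_descale (N := 725760) (by norm_num)
  refine nng_congr (q := ofL [13789440, 62241984, 118644624, 121946440, 72051700, 24922842, 5217702, 632100, 41160, 1274, 14]) ?_ (nng_ofL _)
  unfold Eo U
  linear_combination (norm := (simp only [ofL_cons, ofL_nil, Nat.reduceAdd, Nat.reduceMul]; push_cast; ring1)) ((18:ℝ[X]) * ((2:ℝ[X]) * Q 1 2)) * Q1_8 + ((18:ℝ[X]) * ((887040:ℝ[X]) + (2427312:ℝ[X])*X + (2515036:ℝ[X])*X^2 + (1258628:ℝ[X])*X^3 + (324569:ℝ[X])*X^4 + (43568:ℝ[X])*X^5 + (2954:ℝ[X])*X^6 + (92:ℝ[X])*X^7 + X^8)) * Q1_2 + ((-4:ℝ[X]) * ((1:ℝ[X]) * Q 1 1)) * Q1_9 + ((-4:ℝ[X]) * ((10886400:ℝ[X]) + (32304240:ℝ[X])*X + (37012572:ℝ[X])*X^2 + (21034376:ℝ[X])*X^3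 + (6431733:ℝ[X])*X^4 + (1088409:ℝ[X])*X^5 + (101178:ℝ[X])*X^6 + (4974:ℝ[X])*X^7 + (117:ℝ[X])*X^8 + X^9)) * Q1_1 + ((-6531840:ℝ[X]) * (X + 1)^2) * Q1_1

lemma base2_1_9 : nng (((2:ℕ):ℝ[X]) * Eo 1 1 9 - ((1*(9+1):ℕ):ℝ[X]) * U 1 1) := by
  apply nng_descale (N := 7257600) (by norm_num)
  refine nng_congr (q := ofL [188697600, 943061760, 1942263936, 2129475776, 1354721920, 522774320, 126950208, 18893808, 1649280, 79120, 1856, 16]) ?_ (nng_ofL _)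
  unfold Eo U
  linear_combination (norm := (simp only [ofL_cons, ofL_nil, Nat.reduceAdd, Nat.reduceMul]; push_cast; ring1)) ((20:ℝ[X]) * ((2:ℝ[X]) * Q 1 2)) * Q1_9 + ((20:ℝ[X]) * ((10886400:ℝ[X]) + (32304240:ℝ[X])*X + (37012572:ℝ[X])*X^2 + (21034376:ℝ[X])*X^3 + (6431733:ℝ[X])*X^4 + (1088409:ℝ[X])*X^5 + (101178:ℝ[X])*X^6 + (4974:ℝ[X])*X^7 + (117:ℝ[X])*X^8 + X^9)) * Q1_2 + ((-4:ℝ[X]) * ((1:ℝ[X]) * Q 1 1)) * Q1_10 + ((-4:ℝ[X]) * ((152409600:ℝ[X]) + (475637760:ℝ[X])*X + (586653696:ℝ[X])*X^2 + (370356380:ℝ[X])*X^3 + (130520060:ℝ[X])*X^4 + (26519745:ℝ[X])*X^5 + (3135153:ℝ[X])*X^6 + (212370:ℝ[X])*X^7 + (7890:ℝ[X])*X^8 + (145:ℝ[X])*X^9 + X^10)) * Q1_1 + ((-72576000:ℝ[X]) * (X + 1)^2) * Q1_1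

lemma base2_1_10 : nng (((2:ℕ):ℝ[X]) * Eo 1 1 10 - ((1*(10+1):ℕ):ℝ[X]) * U 1 1) := by
  apply nng_descale (N := 79833600) (by norm_num)
  refine nng_congr (q := ofL [3592512000, 17203121280, 35034440544, 39346707312, 26622433728, 11319036300, 3108552282, 544668696, 59315454, 3859020, 141174, 2592, 18]) ?_ (nng_ofL _)
  unfold Eo U
  linear_combination (norm := (simp only [ofL_cons, ofL_nil, Nat.reduceAdd, Nat.reduceMul]; push_cast; ring1)) ((22:ℝ[X]) * ((2:ℝ[X]) * Q 1 2)) * Q1_10 + ((22:ℝ[X]) * ((152409600:ℝ[X]) + (475637760:ℝ[X])*X + (586653696:ℝ[X])*X^2 + (370356380:ℝ[X])*X^3 + (130520060:ℝ[X])*X^4 + (26519745:ℝ[X])*X^5 + (3135153:ℝ[X])*X^6 + (212370:ℝ[X])*X^7 + (7890:ℝ[X])*X^8 + (145:ℝ[X])*X^9 + X^10)) * Q1_2 + ((-4:ℝ[X]) * ((1:ℝ[X]) * Q 1 1)) * Q1_11 + ((-4:ℝ[X]) * ((2235340800:ℝ[X]) + (7460546400:ℝ[X])*X + (9946888776:ℝ[X])*X^2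 + (6893716676:ℝ[X])*X^3 + (2733511990:ℝ[X])*X^4 + (646425065:ℝ[X])*X^5 + (92563548:ℝ[X])*X^6 + (8016723:ℝ[X])*X^7 + (411510:ℝ[X])*X^8 + (11935:ℝ[X])*X^9 + (176:ℝ[X])*X^10 + X^11)) * Q1_1 + ((-878169600:ℝ[X]) * (X + 1)^2) * Q1_1

lemma base2_1_11 : nng (((2:ℕ):ℝ[X]) * Eo 1 1 11 - ((1*(11+1):ℕ):ℝ[X]) * U 1 1) := by
  apply nng_descale (N := 958003200) (by norm_num)
  refine nng_congr (q := ofL [55564185600, 292329423360, 639197003520, 762003720480, 549722969840, 253926481160, 77451086020, 15535136980, 2016907860, 165423060, 8266060, 237340, 3500, 20]) ?_ (nng_ofL _)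
  unfold Eo U
  linear_combination (norm := (simp only [ofL_cons, ofL_nil, Nat.reduceAdd, Nat.reduceMul]; push_cast; ring1)) ((24:ℝ[X]) * ((2:ℝ[X]) * Q 1 2)) * Q1_11 + ((24:ℝ[X]) * ((2235340800:ℝ[X]) + (7460546400:ℝ[X])*X + (9946888776:ℝ[X])*X^2 + (6893716676:ℝ[X])*X^3 + (2733511990:ℝ[X])*X^4 + (646425065:ℝ[X])*X^5 + (92563548:ℝ[X])*X^6 + (8016723:ℝ[X])*X^7 + (411510:ℝ[X])*X^8 + (11935:ℝ[X])*X^9 + (176:ℝ[X])*X^10 + X^11)) * Q1_2 + ((-4:ℝ[X]) * ((1:ℝ[X]) * Q 1 1)) * Q1_12 + ((-4:ℝ[X]) * ((36883123200:ℝ[X]) + (127525829760:ℝ[X])*X + (180006657984:ℝ[X])*X^2 + (135237544200:ℝ[X])*X^3 + (59428834036:ℝ[X])*X^4 + (15971406990:ℝ[X])*X^5 + (2681170547:ℝ[X])*X^6 + (282903390:ℝ[X])*X^7 + (18628863:ℝ[X])*X^8 + (747450:ℝ[X])*X^9 + (17369:ℝ[X])*X^10 + (210:ℝ[X])*X^11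 + X^12)) * Q1_1 + ((-11496038400:ℝ[X]) * (X + 1)^2) * Q1_1

lemma keyB_1_2 : ((12:ℕ):ℝ[X]) * Eo 1 1 2 = ofL [12, 0, 17, 4, 1] + ((26:ℕ):ℝ[X]) * X := by
  unfold Eo
  linear_combination (norm := (simp only [ofL_cons, ofL_nil, Nat.reduceAdd, Nat.reduceMul]; push_cast; ring1)) ((3:ℝ[X]) * ((2:ℝ[X]) * Q 1 2)) * Q1_2 + ((3:ℝ[X]) * ((4:ℝ[X]) + (5:ℝ[X])*X + X^2)) * Q1_2 + ((-2:ℝ[X]) * ((1:ℝ[X]) * Q 1 1)) * Q1_3 + ((-2:ℝ[X]) * ((18:ℝ[X]) + (29:ℝ[X])*X + (12:ℝ[X])*X^2 + X^3)) * Q1_1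

lemma base1_1_2 : nng (Eo 1 1 2) := by
  apply nng_descale (N := 12) (by norm_num)
  refine nng_congr (q := ofL [12, 0, 17, 4, 1] + ((26:ℕ):ℝ[X]) * X) keyB_1_2 ?_
  exact nng_add (nng_ofL _) (nng_mul (nng_natCast _) nng_X)

lemma goodB_1_2 : GoodE (Eo 1 1 2) :=
  ⟨12, 26, ofL [12, 0, 17, 4, 1], by norm_num, by norm_num, nng_ofL _, keyB_1_2⟩

lemma keyB_1_3 : ((48:ℕ):ℝ[X]) * Eo 1 1 3 = ofL [48, 0, 170, 90, 22, 2] + ((148:ℕ):ℝ[X]) * X := by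
  unfold Eo
  linear_combination (norm := (simp only [ofL_cons, ofL_nil, Nat.reduceAdd, Nat.reduceMul]; push_cast; ring1)) ((4:ℝ[X]) * ((2:ℝ[X]) * Q 1 2)) * Q1_3 + ((4:ℝ[X]) * ((18:ℝ[X]) + (29:ℝ[X])*X + (12:ℝ[X])*X^2 + X^3)) * Q1_2 + ((-2:ℝ[X]) * ((1:ℝ[X]) * Q 1 1)) * Q1_4 + ((-2:ℝ[X]) * ((120:ℝ[X]) + (218:ℝ[X])*X + (119:ℝ[X])*X^2 + (22:ℝ[X])*X^3 + X^4)) * Q1_1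

lemma base1_1_3 : nng (Eo 1 1 3) := by
  apply nng_descale (N := 48) (by norm_num)
  refine nng_congr (q := ofL [48, 0, 170, 90, 22, 2] + ((148:ℕ):ℝ[X]) * X) keyB_1_3 ?_
  exact nng_add (nng_ofL _) (nng_mul (nng_natCast _) nng_X)

lemma goodB_1_3 : GoodE (Eo 1 1 3) :=
  ⟨48, 148, ofL [48, 0, 170, 90, 22, 2], by norm_num, by norm_num, nng_ofL _, keyB_1_3⟩

lemma keyK_1_0 : nng (((6:ℕ):ℝ[X]) * Eo 1 1 0 + ((1:ℕ):ℝ[X]) * U 1 1) := by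
  apply nng_descale (N := 2) (by norm_num)
  refine nng_congr (q := ofL [14, 12, 0, 2]) ?_ (nng_ofL _)
  unfold Eo U
  linear_combination (norm := (simp only [ofL_cons, ofL_nil, Nat.reduceAdd, Nat.reduceMul]; push_cast; ring1)) ((6:ℝ[X]) * ((2:ℝ[X]) * Q 1 2)) * Q1_0 + ((6:ℝ[X]) * ((1:ℝ[X]))) * Q1_2 + ((-12:ℝ[X]) * ((1:ℝ[X]) * Q 1 1)) * Q1_1 + ((-12:ℝ[X]) * ((1:ℝ[X]) + X)) * Q1_1 + ((2:ℝ[X]) * (X + 1)^2) * Q1_1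

lemma keyU_2 : ((2:ℕ):ℝ[X]) * U 2 2 = ofL [80, 0, 152, 64, 13, 1] + ((176:ℕ):ℝ[X]) * X := by
  unfold U
  linear_combination (norm := (simp only [ofL_cons, ofL_nil, Nat.reduceAdd, Nat.reduceMul]; push_cast; ring1)) ((1:ℝ[X]) * (X + 2)^3) * Q2_2

lemma base2_2_6 : nng (((3:ℕ):ℝ[X]) * Eo 2 2 6 - ((1*(6+1):ℕ):ℝ[X]) * U 2 2) := by
  apply nng_descale (N := 30240) (by norm_num)
  refine nng_congr (q := ofL [604800, 6315840, 13049568, 11894640, 5728464, 1533168, 227052, 18180, 756, 12]) ?_ (nng_ofL _)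
  unfold Eo U
  linear_combination (norm := (simp only [ofL_cons, ofL_nil, Nat.reduceAdd, Nat.reduceMul]; push_cast; ring1)) ((21:ℝ[X]) * ((6:ℝ[X]) * Q 2 3)) * Q2_6 + ((21:ℝ[X]) * ((46800:ℝ[X]) + (66588:ℝ[X])*X + (35644:ℝ[X])*X^2 + (8955:ℝ[X])*X^3 + (1075:ℝ[X])*X^4 + (57:ℝ[X])*X^5 + X^6)) * Q2_3 + ((-9:ℝ[X]) * ((2:ℝ[X]) * Q 2 2)) * Q2_7 + ((-9:ℝ[X]) * ((554400:ℝ[X]) + (878520:ℝ[X])*X + (538748:ℝ[X])*X^2 + (162694:ℝ[X])*X^3 + (25655:ℝ[X])*X^4 + (2065:ℝ[X])*X^5 + (77:ℝ[X])*X^6 + X^7)) * Q2_2 + ((-105840:ℝ[X]) * (X + 2)^3) * Q2_2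

lemma base2_2_7 : nng (((3:ℕ):ℝ[X]) * Eo 2 2 7 - ((1*(7+1):ℕ):ℝ[X]) * U 2 2) := by
  apply nng_descale (N := 241920) (by norm_num)
  refine nng_congr (q := ofL [49593600, 220842720, 352697400, 286765620, 134013270, 37625805, 6403635, 657090, 39600, 1245, 15]) ?_ (nng_ofL _)
  unfold Eo U
  linear_combination (norm := (simp only [ofL_cons, ofL_nil, Nat.reduceAdd, Nat.reduceMul]; push_cast; ring1)) ((24:ℝ[X]) * ((6:ℝ[X]) * Q 2 3)) * Q2_7 + ((24:ℝ[X]) * ((554400:ℝ[X]) + (878520:ℝ[X])*X + (538748:ℝ[X])*X^2 + (162694:ℝ[X])*X^3 + (25655:ℝ[X])*X^4 + (2065:ℝ[X])*X^5 + (77:ℝ[X])*X^6 + X^7)) * Q2_3 + ((-9:ℝ[X]) * ((2:ℝ[X]) * Q 2 2)) * Q2_8 + ((-9:ℝ[X]) * ((7459200:ℝ[X]) + (12767760:ℝ[X])*X + (8720284:ℝ[X])*X^2 + (3054940:ℝ[X])*X^3 + (590009:ℝ[X])*X^4 + (63280:ℝ[X])*X^5 + (3626:ℝ[X])*X^6 +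 (100:ℝ[X])*X^7 + X^8)) * Q2_2 + ((-967680:ℝ[X]) * (X + 2)^3) * Q2_2

lemma base2_2_8 : nng (((3:ℕ):ℝ[X]) * Eo 2 2 8 - ((1*(8+1):ℕ):ℝ[X]) * U 2 2) := by
  apply nng_descale (N := 2177280) (by norm_num)
  refine nng_congr (q := ofL [1502323200, 5267255040, 7695855360, 6155102016, 2970839952, 901113048, 174467412, 21629106, 1689768, 78372, 1908, 18]) ?_ (nng_ofL _)
  unfold Eo U
  linear_combination (norm := (simp only [ofL_cons, ofL_nil, Nat.reduceAdd, Nat.reduceMul]; push_cast; ring1)) ((27:ℝ[X]) * ((6:ℝ[X]) * Q 2 3)) * Q2_8 + ((27:ℝ[X]) * ((7459200:ℝ[X]) + (12767760:ℝ[X])*X + (8720284:ℝ[X])*X^2 + (3054940:ℝ[X])*X^3 + (590009:ℝ[X])*X^4 + (63280:ℝ[X])*X^5 + (3626:ℝ[X])*X^6 + (100:ℝ[X])*X^7 + X^8)) * Q2_3 + ((-9:ℝ[X]) * ((2:ℝ[X]) * Q 2 2)) * Q2_9 + ((-9:ℝ[X]) * ((108864000:ℝ[X]) + (201244320:ℝ[X])*X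 + (151215624:ℝ[X])*X^2 + (59849684:ℝ[X])*X^3 + (13573854:ℝ[X])*X^4 + (1806609:ℝ[X])*X^5 + (139356:ℝ[X])*X^6 + (5946:ℝ[X])*X^7 + (126:ℝ[X])*X^8 + X^9)) * Q2_2 + ((-9797760:ℝ[X]) * (X + 2)^3) * Q2_2

lemma base2_2_9 : nng (((3:ℕ):ℝ[X]) * Eo 2 2 9 - ((1*(9+1):ℕ):ℝ[X]) * U 2 2) := by
  apply nng_descale (N := 21772800) (by norm_num)
  refine nng_congr (q := ofL [30155328000, 106852737600, 158804649360, 130916075472, 66458140896, 21795905880, 4723565595, 681610356, 64905183, 3946320, 143745, 2772, 21]) ?_ (nng_ofL _)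
  unfold Eo U
  linear_combination (norm := (simp only [ofL_cons, ofL_nil, Nat.reduceAdd, Nat.reduceMul]; push_cast; ring1)) ((30:ℝ[X]) * ((6:ℝ[X]) * Q 2 3)) * Q2_9 + ((30:ℝ[X]) * ((108864000:ℝ[X]) + (201244320:ℝ[X])*X + (151215624:ℝ[X])*X^2 + (59849684:ℝ[X])*X^3 + (13573854:ℝ[X])*X^4 + (1806609:ℝ[X])*X^5 + (139356:ℝ[X])*X^6 + (5946:ℝ[X])*X^7 + (126:ℝ[X])*X^8 + X^9)) * Q2_3 + ((-9:ℝ[X]) * ((2:ℝ[X]) * Q 2 2)) * Q2_10 + ((-9:ℝ[X]) * ((1745452800:ℝ[X]) + (3435055200:ℝ[X])*X + (2797753896:ℝ[X])*X^2 + (1228224220:ℝ[X])*X^3 + (318149810:ℝ[X])*X^4 + (50250795:ℝ[X])*X^5 + (4855053:ℝ[X])*X^6 + (280830:ℝ[X])*X^7 + (9240:ℝ[X])*X^8 + (155:ℝ[X])*X^9 + X^10)) * Q2_2 + ((-108864000:ℝ[X]) * (X + 2)^3) * Q2_2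

lemma base2_2_10 : nng (((3:ℕ):ℝ[X]) * Eo 2 2 10 - ((1*(10+1):ℕ):ℝ[X]) * U 2 2) := by
  apply nng_descale (N := 239500800) (by norm_num)
  refine nng_congr (q := ofL [649047168000, 2250581760000, 3368120520960, 2861203704192, 1529184290304, 539961585504, 129125673600, 21131820336, 2359305432, 176331672, 8503440, 247872, 3864, 24]) ?_ (nng_ofL _)
  unfold Eo U
  linear_combination (norm := (simp only [ofL_cons, ofL_nil, Nat.reduceAdd, Nat.reduceMul]; push_cast; ring1)) ((33:ℝ[X]) * ((6:ℝ[X]) * Q 2 3)) * Q2_10 + ((33:ℝ[X]) * ((1745452800:ℝ[X]) + (3435055200:ℝ[X])*X + (2797753896:ℝ[X])*X^2 + (1228224220:ℝ[X])*X^3 + (318149810:ℝ[X])*X^4 + (50250795:ℝ[X])*X^5 + (4855053:ℝ[X])*X^6 + (280830:ℝ[X])*X^7 + (9240:ℝ[X])*X^8 + (155:ℝ[X])*X^9 + X^10)) * Q2_3 + ((-9:ℝ[X]) * ((2:ℝ[X]) * Q 2 2)) * Q2_11 + ((-9:ℝ[X]) * ((30017433600:ℝ[X]) + (62816546880:ℝ[X])*X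 + (55062125712:ℝ[X])*X^2 + (26447939936:ℝ[X])*X^3 + (7665022640:ℝ[X])*X^4 + (1394750720:ℝ[X])*X^5 + (161242851:ℝ[X])*X^6 + (11759913:ℝ[X])*X^7 + (527010:ℝ[X])*X^8 + (13750:ℝ[X])*X^9 + (187:ℝ[X])*X^10 + X^11)) * Q2_2 + ((-1317254400:ℝ[X]) * (X + 2)^3) * Q2_2

lemma base2_2_11 : nng (((3:ℕ):ℝ[X]) * Eo 2 2 11 - ((1*(11+1):ℕ):ℝ[X]) * U 2 2) := by
  apply nng_descale (N := 2874009600) (by norm_num)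
  refine nng_congr (q := ofL [13234814208000, 47393342092800, 73324069214400, 64843308130032, 36505305832320, 13792973283936, 3595710290832, 655085122461, 83483446365, 7365436353, 439961841, 17116407, 406215, 5211, 27]) ?_ (nng_ofL _)
  unfold Eo U
  linear_combination (norm := (simp only [ofL_cons, ofL_nil, Nat.reduceAdd, Nat.reduceMul]; push_cast; ring1)) ((36:ℝ[X]) * ((6:ℝ[X]) * Q 2 3)) * Q2_11 + ((36:ℝ[X]) * ((30017433600:ℝ[X]) + (62816546880:ℝ[X])*X + (55062125712:ℝ[X])*X^2 + (26447939936:ℝ[X])*X^3 + (7665022640:ℝ[X])*X^4 + (1394750720:ℝ[X])*X^5 + (161242851:ℝ[X])*X^6 + (11759913:ℝ[X])*X^7 + (527010:ℝ[X])*X^8 + (13750:ℝ[X])*X^9 + (187:ℝ[X])*X^10 + X^11)) * Q2_3 + ((-9:ℝ[X]) * ((2:ℝ[X]) * Q 2 2)) * Q2_12 + ((-9:ℝ[X]) * ((558036864000:ℝ[X]) + (1229047430400:ℝ[X])*X + (1148714203680:ℝ[X])*X^2 + (597300101112:ℝ[X])*X^3 + (190806962236:ℝ[X])*X^4 + (39141271290:ℝ[X])*X^5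 + (5249633675:ℝ[X])*X^6 + (460996866:ℝ[X])*X^7 + (26172663:ℝ[X])*X^8 + (932910:ℝ[X])*X^9 + (19745:ℝ[X])*X^10 + (222:ℝ[X])*X^11 + X^12)) * Q2_2 + ((-17244057600:ℝ[X]) * (X + 2)^3) * Q2_2

lemma base2_2_12 : nng (((3:ℕ):ℝ[X]) * Eo 2 2 12 - ((1*(12+1):ℕ):ℝ[X]) * U 2 2) := by
  apply nng_descale (N := 37362124800) (by norm_num)
  refine nng_congr (q := ofL [294413543424000, 1059159541708800, 1674134051155200, 1533877644775680, 906457193291520, 364386501754080, 102556023364080, 20507323808400, 2925592956000, 296340557370, 21026027880, 1019877690, 32507280, 637950, 6840, 30]) ?_ (nng_ofL _)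
  unfold Eo U
  linear_combination (norm := (simp only [ofL_cons, ofL_nil, Nat.reduceAdd, Nat.reduceMul]; push_cast; ring1)) ((39:ℝ[X]) * ((6:ℝ[X]) * Q 2 3)) * Q2_12 + ((39:ℝ[X]) * ((558036864000:ℝ[X]) + (1229047430400:ℝ[X])*X + (1148714203680:ℝ[X])*X^2 + (597300101112:ℝ[X])*X^3 + (190806962236:ℝ[X])*X^4 + (39141271290:ℝ[X])*X^5 + (5249633675:ℝ[X])*X^6 + (460996866:ℝ[X])*X^7 + (26172663:ℝ[X])*X^8 + (932910:ℝ[X])*X^9 + (19745:ℝ[X])*X^10 + (222:ℝ[X])*X^11 + X^12)) * Q2_3 + ((-9:ℝ[X]) * ((2:ℝ[X]) * Q 2 2)) * Q2_13 + ((-9:ℝ[X]) * ((11021826816000:ℝ[X]) + (25538295513600:ℝ[X])*X + (25328061120960:ℝ[X])*X^2 + (14136638255376:ℝ[X])*X^3 + (4919414648720:ℝ[X])*X^4 + (1119457452256:ℝ[X])*X^5 + (170320905040:ℝ[X])*X^6 + (17448777203:ℝ[X])*X^7 + (1198360020:ℝ[X])*X^8 + (54297243:ℝ[X])*X^9 +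 (1573000:ℝ[X])*X^10 + (27521:ℝ[X])*X^11 + (260:ℝ[X])*X^12 + X^13)) * Q2_2 + ((-242853811200:ℝ[X]) * (X + 2)^3) * Q2_2

lemma base2_2_13 : nng (((3:ℕ):ℝ[X]) * Eo 2 2 13 - ((1*(13+1):ℕ):ℝ[X]) * U 2 2) := by
  apply nng_descale (N := 523069747200) (by norm_num)
  refine nng_congr (q := ofL [6572371373568000, 24360631552857600, 39773460459110400, 37857915652566240, 23435451871145424, 9970464054799248, 3005388260506632, 652387964506278, 102660076492545, 11699602798884, 958082664396, 55503752304, 2217613398, 58726668, 966372, 8778, 33]) ?_ (nng_ofL _)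
  unfold Eo U
  linear_combination (norm := (simp only [ofL_cons, ofL_nil, Nat.reduceAdd, Nat.reduceMul]; push_cast; ring1)) ((42:ℝ[X]) * ((6:ℝ[X]) * Q 2 3)) * Q2_13 + ((42:ℝ[X]) * ((11021826816000:ℝ[X]) + (25538295513600:ℝ[X])*X + (25328061120960:ℝ[X])*X^2 + (14136638255376:ℝ[X])*X^3 + (4919414648720:ℝ[X])*X^4 + (1119457452256:ℝ[X])*X^5 + (170320905040:ℝ[X])*X^6 + (17448777203:ℝ[X])*X^7 + (1198360020:ℝ[X])*X^8 + (54297243:ℝ[X])*X^9 + (1573000:ℝ[X])*X^10 + (27521:ℝ[X])*X^11 + (260:ℝ[X])*X^12 + X^13)) * Q2_3 + ((-9:ℝ[X]) * ((2:ℝ[X]) * Q 2 2)) * Q2_14 + ((-9:ℝ[X]) * ((232330146048000:ℝ[X]) + (562644318700800:ℝ[X])*X + (588544065601920:ℝ[X])*X^2 + (350151612881616:ℝ[X])*X^3 + (131512062101056:ℝ[X])*X^4 + (32784519223456:ℝ[X])*X^5 + (5563567925916:ℝ[X])*X^6 + (649843116923:ℝ[X])*X^7 + (52294113443:ℝ[X])*X^8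 + (2876216343:ℝ[X])*X^9 + (106169063:ℝ[X])*X^10 + (2545361:ℝ[X])*X^11 + (37401:ℝ[X])*X^12 + (301:ℝ[X])*X^13 + X^14)) * Q2_2 + ((-3661488230400:ℝ[X]) * (X + 2)^3) * Q2_2

lemma base2_2_14 : nng (((3:ℕ):ℝ[X]) * Eo 2 2 14 - ((1*(14+1):ℕ):ℝ[X]) * U 2 2) := by
  apply nng_descale (N := 7846046208000) (by norm_num)
  refine nng_congr (q := ofL [156999384622080000, 591619445835264000, 990954235317312000, 976052182842328320, 630701667037836288, 282667238103521664, 90657264352243680, 21175886320439760, 3633383361784176, 458785399108608, 42464102992740, 2852635834620, 136762382484, 4559491692, 101597580, 1419300, 11052, 36]) ?_ (nng_ofL _)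
  unfold Eo U
  linear_combination (norm := (simp only [ofL_cons, ofL_nil, Nat.reduceAdd, Nat.reduceMul]; push_cast; ring1)) ((45:ℝ[X]) * ((6:ℝ[X]) * Q 2 3)) * Q2_14 + ((45:ℝ[X]) * ((232330146048000:ℝ[X]) + (562644318700800:ℝ[X])*X + (588544065601920:ℝ[X])*X^2 + (350151612881616:ℝ[X])*X^3 + (131512062101056:ℝ[X])*X^4 + (32784519223456:ℝ[X])*X^5 + (5563567925916:ℝ[X])*X^6 + (649843116923:ℝ[X])*X^7 + (52294113443:ℝ[X])*X^8 + (2876216343:ℝ[X])*X^9 + (106169063:ℝ[X])*X^10 + (2545361:ℝ[X])*X^11 + (37401:ℝ[X])*X^12 + (301:ℝ[X])*X^13 + X^14)) * Q2_3 + ((-9:ℝ[X]) * ((2:ℝ[X]) * Q 2 2)) * Q2_15 + ((-9:ℝ[X]) * ((5173159799808000:ℝ[X]) + (13074737047948800:ℝ[X])*X + (14373221206890240:ℝ[X])*X^2 + (9064181303384544:ℝ[X])*X^3 + (3646464458211120:ℝ[X])*X^4 + (985938266636960:ℝ[X])*X^5 + (184183678518840:ℝ[X])*X^6 + (24105093250238:ℝ[X])*X^7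 + (2220590364135:ℝ[X])*X^8 + (143590881005:ℝ[X])*X^9 + (6450519075:ℝ[X])*X^10 + (197368717:ℝ[X])*X^11 + (3976245:ℝ[X])*X^12 + (49735:ℝ[X])*X^13 + (345:ℝ[X])*X^14 + X^15)) * Q2_2 + ((-58845346560000:ℝ[X]) * (X + 2)^3) * Q2_2

lemma base2_2_15 : nng (((3:ℕ):ℝ[X]) * Eo 2 2 15 - ((1*(15+1):ℕ):ℝ[X]) * U 2 2) := by
  apply nng_descale (N := 125536739328000) (by norm_num)
  refine nng_congr (q := ofL [3855233264762880000, 14912840191302144000, 25730336267210764800, 26233786933054871040, 17656063292481370848, 8302713015432350736, 2817639578439899616, 703133909539359480, 130336018305217686, 18016533210979017, 1855109105456607, 141435917866620, 7895192184984, 317069037558, 8924515938, 169249860, 2029482, 13689, 39]) ?_ (nng_ofL _)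
  unfold Eo U
  linear_combination (norm := (simp only [ofL_cons, ofL_nil, Nat.reduceAdd, Nat.reduceMul]; push_cast; ring1)) ((48:ℝ[X]) * ((6:ℝ[X]) * Q 2 3)) * Q2_15 + ((48:ℝ[X]) * ((5173159799808000:ℝ[X]) + (13074737047948800:ℝ[X])*X + (14373221206890240:ℝ[X])*X^2 + (9064181303384544:ℝ[X])*X^3 + (3646464458211120:ℝ[X])*X^4 + (985938266636960:ℝ[X])*X^5 + (184183678518840:ℝ[X])*X^6 + (24105093250238:ℝ[X])*X^7 + (2220590364135:ℝ[X])*X^8 + (143590881005:ℝ[X])*X^9 + (6450519075:ℝ[X])*X^10 + (197368717:ℝ[X])*X^11 + (3976245:ℝ[X])*X^12 + (49735:ℝ[X])*X^13 + (345:ℝ[X])*X^14 + X^15)) * Q2_3 + ((-9:ℝ[X]) * ((2:ℝ[X]) * Q 2 2)) * Q2_16 + ((-9:ℝ[X]) * ((121812482727936000:ℝ[X]) + (319965710087116800:ℝ[X])*X + (368081158825762560:ℝ[X])*X^2 + (244836855137605248:ℝ[X])*X^3 + (104845246821507984:ℝ[X])*X^4 + (30498047473479040:ℝ[X])*X^5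 + (6206248629624680:ℝ[X])*X^6 + (897824910278296:ℝ[X])*X^7 + (93020565756833:ℝ[X])*X^8 + (6907992211120:ℝ[X])*X^9 + (365795718860:ℝ[X])*X^10 + (13646788064:ℝ[X])*X^11 + (351260182:ℝ[X])*X^12 + (6025040:ℝ[X])*X^13 + (64900:ℝ[X])*X^14 + (392:ℝ[X])*X^15 + X^16)) * Q2_2 + ((-1004293914624000:ℝ[X]) * (X + 2)^3) * Q2_2

lemma keyB_2_3 : ((144:ℕ):ℝ[X]) * Eo 2 2 3 = ofL [0, 0, 1528, 831, 199, 21, 1] + ((1020:ℕ):ℝ[X]) * X := by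
  unfold Eo
  linear_combination (norm := (simp only [ofL_cons, ofL_nil, Nat.reduceAdd, Nat.reduceMul]; push_cast; ring1)) ((4:ℝ[X]) * ((6:ℝ[X]) * Q 2 3)) * Q2_3 + ((4:ℝ[X]) * ((60:ℝ[X]) + (56:ℝ[X])*X + (15:ℝ[X])*X^2 + X^3)) * Q2_3 + ((-3:ℝ[X]) * ((2:ℝ[X]) * Q 2 2)) * Q2_4 + ((-3:ℝ[X]) * ((480:ℝ[X]) + (526:ℝ[X])*X + (191:ℝ[X])*X^2 + (26:ℝ[X])*X^3 + X^4)) * Q2_2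

lemma base1_2_3 : nng (Eo 2 2 3) := by
  apply nng_descale (N := 144) (by norm_num)
  refine nng_congr (q := ofL [0, 0, 1528, 831, 199, 21, 1] + ((1020:ℕ):ℝ[X]) * X) keyB_2_3 ?_
  exact nng_add (nng_ofL _) (nng_mul (nng_natCast _) nng_X)

lemma goodB_2_3 : GoodE (Eo 2 2 3) :=
  ⟨144, 1020, ofL [0, 0, 1528, 831, 199, 21, 1], by norm_num, by norm_num, nng_ofL _, keyB_2_3⟩

lemma keyB_2_4 : ((720:ℕ):ℝ[X]) * Eo 2 2 4 = ofL [14400, 0, 34576, 18248, 5320, 830, 64, 2] + ((34560:ℕ):ℝ[X]) * X := by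
  unfold Eo
  linear_combination (norm := (simp only [ofL_cons, ofL_nil, Nat.reduceAdd, Nat.reduceMul]; push_cast; ring1)) ((5:ℝ[X]) * ((6:ℝ[X]) * Q 2 3)) * Q2_4 + ((5:ℝ[X]) * ((480:ℝ[X]) + (526:ℝ[X])*X + (191:ℝ[X])*X^2 + (26:ℝ[X])*X^3 + X^4)) * Q2_3 + ((-3:ℝ[X]) * ((2:ℝ[X]) * Q 2 2)) * Q2_5 + ((-3:ℝ[X]) * ((4320:ℝ[X]) + (5564:ℝ[X])*X + (2540:ℝ[X])*X^2 + (495:ℝ[X])*X^3 + (40:ℝ[X])*X^4 + X^5)) * Q2_2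

lemma base1_2_4 : nng (Eo 2 2 4) := by
  apply nng_descale (N := 720) (by norm_num)
  refine nng_congr (q := ofL [14400, 0, 34576, 18248, 5320, 830, 64, 2] + ((34560:ℕ):ℝ[X]) * X) keyB_2_4 ?_
  exact nng_add (nng_ofL _) (nng_mul (nng_natCast _) nng_X)

lemma goodB_2_4 : GoodE (Eo 2 2 4) :=
  ⟨720, 34560, ofL [14400, 0, 34576, 18248, 5320, 830, 64, 2], by norm_num, by norm_num, nng_ofL _, keyB_2_4⟩

lemma keyB_2_5 : ((4320:ℕ):ℝ[X]) * Eo 2 2 5 = ofL [151200, 0, 564636, 341382, 115467, 22440, 2454, 138, 3] + ((474120:ℕ):ℝ[X]) * X := by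
  unfold Eo
  linear_combination (norm := (simp only [ofL_cons, ofL_nil, Nat.reduceAdd, Nat.reduceMul]; push_cast; ring1)) ((6:ℝ[X]) * ((6:ℝ[X]) * Q 2 3)) * Q2_5 + ((6:ℝ[X]) * ((4320:ℝ[X]) + (5564:ℝ[X])*X + (2540:ℝ[X])*X^2 + (495:ℝ[X])*X^3 + (40:ℝ[X])*X^4 + X^5)) * Q2_3 + ((-3:ℝ[X]) * ((2:ℝ[X]) * Q 2 2)) * Q2_6 + ((-3:ℝ[X]) * ((46800:ℝ[X]) + (66588:ℝ[X])*X + (35644:ℝ[X])*X^2 + (8955:ℝ[X])*X^3 + (1075:ℝ[X])*X^4 + (57:ℝ[X])*X^5 + X^6)) * Q2_2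

lemma base1_2_5 : nng (Eo 2 2 5) := by
  apply nng_descale (N := 4320) (by norm_num)
  refine nng_congr (q := ofL [151200, 0, 564636, 341382, 115467, 22440, 2454, 138, 3] + ((474120:ℕ):ℝ[X]) * X) keyB_2_5 ?_
  exact nng_add (nng_ofL _) (nng_mul (nng_natCast _) nng_X)

lemma goodB_2_5 : GoodE (Eo 2 2 5) :=
  ⟨4320, 474120, ofL [151200, 0, 564636, 341382, 115467, 22440, 2454, 138, 3], by norm_num, by norm_num, nng_ofL _, keyB_2_5⟩

lemma keyK_2_0 : nng (((8:ℕ):ℝ[X]) * Eo 2 2 0 + ((1:ℕ):ℝ[X]) * U 2 2) := by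
  apply nng_descale (N := 6) (by norm_num)
  refine nng_congr (q := ofL [240, 400, 360, 176, 39, 3]) ?_ (nng_ofL _)
  unfold Eo U
  linear_combination (norm := (simp only [ofL_cons, ofL_nil, Nat.reduceAdd, Nat.reduceMul]; push_cast; ring1)) ((8:ℝ[X]) * ((6:ℝ[X]) * Q 2 3)) * Q2_0 + ((8:ℝ[X]) * ((1:ℝ[X]))) * Q2_3 + ((-24:ℝ[X]) * ((2:ℝ[X]) * Q 2 2)) * Q2_1 + ((-24:ℝ[X]) * ((2:ℝ[X]) + X)) * Q2_2 + ((3:ℝ[X]) * (X + 2)^3) * Q2_2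

lemma keyK_2_1 : nng (((8:ℕ):ℝ[X]) * Eo 2 2 1 + ((1:ℕ):ℝ[X]) * U 2 2) := by
  apply nng_descale (N := 12) (by norm_num)
  refine nng_congr (q := ofL [0, 448, 632, 320, 70, 6]) ?_ (nng_ofL _)
  unfold Eo U
  linear_combination (norm := (simp only [ofL_cons, ofL_nil, Nat.reduceAdd, Nat.reduceMul]; push_cast; ring1)) ((16:ℝ[X]) * ((6:ℝ[X]) * Q 2 3)) * Q2_1 + ((16:ℝ[X]) * ((2:ℝ[X]) + X)) * Q2_3 + ((-24:ℝ[X]) * ((2:ℝ[X]) * Q 2 2)) * Q2_2 + ((-24:ℝ[X]) * ((10:ℝ[X]) + (7:ℝ[X])*X + X^2)) * Q2_2 + ((6:ℝ[X]) * (X + 2)^3) * Q2_2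

lemma keyU_3 : ((6:ℕ):ℝ[X]) * U 1 3 = ofL [18, 0, 236, 295, 210, 83, 16, 1] + ((101:ℕ):ℝ[X]) * X := by
  unfold U
  linear_combination (norm := (simp only [ofL_cons, ofL_nil, Nat.reduceAdd, Nat.reduceMul]; push_cast; ring1)) ((1:ℝ[X]) * (X + 1)^4) * Q1_3

lemma base2_3_8 : nng (((5:ℕ):ℝ[X]) * Eo 1 3 8 - ((2*(8+1):ℕ):ℝ[X]) * U 1 3) := by
  apply nng_descale (N := 8709120) (by norm_num)
  refine nng_congr (q := ofL [400619520, 1226845440, 1303446240, 627535800, 479577100, 679051770, 490596515, 164289690, 25486575, 2101950, 101225, 2550, 25]) ?_ (nng_ofL _)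
  unfold Eo U
  linear_combination (norm := (simp only [ofL_cons, ofL_nil, Nat.reduceAdd, Nat.reduceMul]; push_cast; ring1)) ((45:ℝ[X]) * ((24:ℝ[X]) * Q 1 4)) * Q1_8 + ((45:ℝ[X]) * ((887040:ℝ[X]) + (2427312:ℝ[X])*X + (2515036:ℝ[X])*X^2 + (1258628:ℝ[X])*X^3 + (324569:ℝ[X])*X^4 + (43568:ℝ[X])*X^5 + (2954:ℝ[X])*X^6 + (92:ℝ[X])*X^7 + X^8)) * Q1_4 + ((-20:ℝ[X]) * ((6:ℝ[X]) * Q 1 3)) * Q1_9 + ((-20:ℝ[X]) * ((10886400:ℝ[X]) + (32304240:ℝ[X])*X + (37012572:ℝ[X])*X^2 + (21034376:ℝ[X])*X^3 + (6431733:ℝ[X])*X^4 + (1088409:ℝ[X])*X^5 + (101178:ℝ[X])*X^6 + (4974:ℝ[X])*X^7 + (117:ℝ[X])*X^8 + X^9)) * Q1_3 + ((-26127360:ℝ[X]) * (X + 1)^4) * Q1_3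

lemma base2_3_9 : nng (((5:ℕ):ℝ[X]) * Eo 1 3 9 - ((2*(9+1):ℕ):ℝ[X]) * U 1 3) := by
  apply nng_descale (N := 87091200) (by norm_num)
  refine nng_congr (q := ofL [5225472000, 23539334400, 46810448640, 57400183920, 51101479560, 34157341980, 15841066470, 4575056910, 766917630, 78292590, 5011890, 190170, 3810, 30]) ?_ (nng_ofL _)
  unfold Eo U
  linear_combination (norm := (simp only [ofL_cons, ofL_nil, Nat.reduceAdd, Nat.reduceMul]; push_cast; ring1)) ((50:ℝ[X]) * ((24:ℝ[X]) * Q 1 4)) * Q1_9 + ((50:ℝ[X]) * ((10886400:ℝ[X]) + (32304240:ℝ[X])*X + (37012572:ℝ[X])*X^2 + (21034376:ℝ[X])*X^3 + (6431733:ℝ[X])*X^4 + (1088409:ℝ[X])*X^5 + (101178:ℝ[X])*X^6 + (4974:ℝ[X])*X^7 + (117:ℝ[X])*X^8 + X^9)) * Q1_4 + ((-20:ℝ[X]) * ((6:ℝ[X]) * Q 1 3)) * Q1_10 + ((-20:ℝ[X]) * ((152409600:ℝ[X]) + (475637760:ℝ[X])*X + (586653696:ℝ[X])*X^2 + (370356380:ℝ[X])*X^3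 + (130520060:ℝ[X])*X^4 + (26519745:ℝ[X])*X^5 + (3135153:ℝ[X])*X^6 + (212370:ℝ[X])*X^7 + (7890:ℝ[X])*X^8 + (145:ℝ[X])*X^9 + X^10)) * Q1_3 + ((-290304000:ℝ[X]) * (X + 1)^4) * Q1_3

lemma base2_3_10 : nng (((5:ℕ):ℝ[X]) * Eo 1 3 10 - ((2*(10+1):ℕ):ℝ[X]) * U 1 3) := by
  apply nng_descale (N := 958003200) (by norm_num)
  refine nng_congr (q := ofL [137952460800, 629525433600, 1298861202240, 1653383104800, 1469011363400, 936827329900, 414945237630, 120964919075, 22443865675, 2719383975, 216703795, 10991225, 334425, 5425, 35]) ?_ (nng_ofL _)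
  unfold Eo U
  linear_combination (norm := (simp only [ofL_cons, ofL_nil, Nat.reduceAdd, Nat.reduceMul]; push_cast; ring1)) ((55:ℝ[X]) * ((24:ℝ[X]) * Q 1 4)) * Q1_10 + ((55:ℝ[X]) * ((152409600:ℝ[X]) + (475637760:ℝ[X])*X + (586653696:ℝ[X])*X^2 + (370356380:ℝ[X])*X^3 + (130520060:ℝ[X])*X^4 + (26519745:ℝ[X])*X^5 + (3135153:ℝ[X])*X^6 + (212370:ℝ[X])*X^7 + (7890:ℝ[X])*X^8 + (145:ℝ[X])*X^9 + X^10)) * Q1_4 + ((-20:ℝ[X]) * ((6:ℝ[X]) * Q 1 3)) * Q1_11 + ((-20:ℝ[X]) * ((2235340800:ℝ[X]) + (7460546400:ℝ[X])*X + (9946888776:ℝ[X])*X^2 + (6893716676:ℝ[X])*X^3 + (2733511990:ℝ[X])*X^4 + (646425065:ℝ[X])*X^5 + (92563548:ℝ[X])*X^6 + (8016723:ℝ[X])*X^7 + (411510:ℝ[X])*X^8 + (11935:ℝ[X])*X^9 + (176:ℝ[X])*X^10 + X^11)) * Q1_3 + ((-3512678400:ℝ[X]) * (X + 1)^4) * 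Q1_3

lemma base2_3_11 : nng (((5:ℕ):ℝ[X]) * Eo 1 3 11 - ((2*(11+1):ℕ):ℝ[X]) * U 1 3) := by
  apply nng_descale (N := 11496038400) (by norm_num)
  refine nng_congr (q := ofL [1988814643200, 11008282060800, 26690291458560, 37960451948160, 35612985350400, 23115001558400, 10403437381920, 3181162755320, 652317718800, 91083225200, 8662676880, 549606880, 22474800, 557200, 7440, 40]) ?_ (nng_ofL _)
  unfold Eo U
  linear_combination (norm := (simp only [ofL_cons, ofL_nil, Nat.reduceAdd, Nat.reduceMul]; push_cast; ring1)) ((60:ℝ[X]) * ((24:ℝ[X]) * Q 1 4)) * Q1_11 + ((60:ℝ[X]) * ((2235340800:ℝ[X]) + (7460546400:ℝ[X])*X + (9946888776:ℝ[X])*X^2 + (6893716676:ℝ[X])*X^3 + (2733511990:ℝ[X])*X^4 + (646425065:ℝ[X])*X^5 + (92563548:ℝ[X])*X^6 + (8016723:ℝ[X])*X^7 + (411510:ℝ[X])*X^8 + (11935:ℝ[X])*X^9 + (176:ℝ[X])*X^10 + X^11)) * Q1_4 + ((-20:ℝ[X]) * ((6:ℝ[X]) * Q 1 3)) * Q1_12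 + ((-20:ℝ[X]) * ((36883123200:ℝ[X]) + (127525829760:ℝ[X])*X + (180006657984:ℝ[X])*X^2 + (135237544200:ℝ[X])*X^3 + (59428834036:ℝ[X])*X^4 + (15971406990:ℝ[X])*X^5 + (2681170547:ℝ[X])*X^6 + (282903390:ℝ[X])*X^7 + (18628863:ℝ[X])*X^8 + (747450:ℝ[X])*X^9 + (17369:ℝ[X])*X^10 + (210:ℝ[X])*X^11 + X^12)) * Q1_3 + ((-45984153600:ℝ[X]) * (X + 1)^4) * Q1_3

lemma base2_3_12 : nng (((5:ℕ):ℝ[X]) * Eo 1 3 12 - ((2*(12+1):ℕ):ℝ[X]) * U 1 3) := by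
  apply nng_descale (N := 149448499200) (by norm_num)
  refine nng_congr (q := ofL [49616901734400, 258132954470400, 611327496395520, 875293699622400, 839628542706480, 560186401460400, 261458498705040, 84784704275700, 19062392977485, 3003132389400, 330983684460, 25174936800, 1293372990, 43299000, 887580, 9900, 45]) ?_ (nng_ofL _)
  unfold Eo U
  linear_combination (norm := (simp only [ofL_cons, ofL_nil, Nat.reduceAdd, Nat.reduceMul]; push_cast; ring1)) ((65:ℝ[X]) * ((24:ℝ[X]) * Q 1 4)) * Q1_12 + ((65:ℝ[X]) * ((36883123200:ℝ[X]) + (127525829760:ℝ[X])*X + (180006657984:ℝ[X])*X^2 + (135237544200:ℝ[X])*X^3 + (59428834036:ℝ[X])*X^4 + (15971406990:ℝ[X])*X^5 + (2681170547:ℝ[X])*X^6 + (282903390:ℝ[X])*X^7 + (18628863:ℝ[X])*X^8 + (747450:ℝ[X])*X^9 + (17369:ℝ[X])*X^10 + (210:ℝ[X])*X^11 + X^12)) * Q1_4 + ((-20:ℝ[X]) * ((6:ℝ[X]) * Q 1 3)) * Q1_13 + ((-20:ℝ[X]) * ((628929100800:ℝ[X]) + (2302819079040:ℝ[X])*X +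 (3460117647168:ℝ[X])*X^2 + (2795111815704:ℝ[X])*X^3 + (1343598885772:ℝ[X])*X^4 + (403305748846:ℝ[X])*X^5 + (77490430589:ℝ[X])*X^6 + (9636715517:ℝ[X])*X^7 + (776056281:ℝ[X])*X^8 + (40024413:ℝ[X])*X^9 + (1287143:ℝ[X])*X^10 + (24479:ℝ[X])*X^11 + (247:ℝ[X])*X^12 + X^13)) * Q1_3 + ((-647610163200:ℝ[X]) * (X + 1)^4) * Q1_3

lemma base2_3_13 : nng (((5:ℕ):ℝ[X]) * Eo 1 3 13 - ((2*(13+1):ℕ):ℝ[X]) * U 1 3) := by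
  apply nng_descale (N := 2092278988800) (by norm_num)
  refine nng_congr (q := ofL [870388059340800, 5051545183641600, 13037801897088000, 19853903960265600, 19890325558980000, 13767115162458400, 6706433134528400, 2309488397598200, 564538860249650, 98749763791250, 12342801013400, 1092623742600, 67554623500, 2852229100, 79251400, 1361200, 12850, 50]) ?_ (nng_ofL _)
  unfold Eo U
  linear_combination (norm := (simp only [ofL_cons, ofL_nil, Nat.reduceAdd, Nat.reduceMul]; push_cast; ring1)) ((70:ℝ[X]) * ((24:ℝ[X]) * Q 1 4)) * Q1_13 + ((70:ℝ[X]) * ((628929100800:ℝ[X]) + (2302819079040:ℝ[X])*X + (3460117647168:ℝ[X])*X^2 + (2795111815704:ℝ[X])*X^3 + (1343598885772:ℝ[X])*X^4 + (403305748846:ℝ[X])*X^5 + (77490430589:ℝ[X])*X^6 + (9636715517:ℝ[X])*X^7 + (776056281:ℝ[X])*X^8 + (40024413:ℝ[X])*X^9 + (1287143:ℝ[X])*X^10 + (24479:ℝ[X])*X^11 + (247:ℝ[X])*X^12 + X^13)) * Q1_4 + ((-20:ℝ[X]) * ((6:ℝ[X]) * Q 1 3)) * Q1_14 + ((-20:ℝ[X])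 * ((11769069312000:ℝ[X]) + (44659367020800:ℝ[X])*X + (70488552208320:ℝ[X])*X^2 + (60722510660448:ℝ[X])*X^3 + (31618134295384:ℝ[X])*X^4 + (10458142146452:ℝ[X])*X^5 + (2258452702506:ℝ[X])*X^6 + (323104570789:ℝ[X])*X^7 + (30783918737:ℝ[X])*X^8 + (1946505561:ℝ[X])*X^9 + (80553473:ℝ[X])*X^10 + (2119663:ℝ[X])*X^11 + (33579:ℝ[X])*X^12 + (287:ℝ[X])*X^13 + X^14)) * Q1_3 + ((-9763968614400:ℝ[X]) * (X + 1)^4) * Q1_3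

lemma base2_3_14 : nng (((5:ℕ):ℝ[X]) * Eo 1 3 14 - ((2*(14+1):ℕ):ℝ[X]) * U 1 3) := by
  apply nng_descale (N := 31384184832000) (by norm_num)
  refine nng_congr (q := ofL [20242799216640000, 116784671173632000, 303510021255936000, 470719224810236160, 484599239359044480, 347325859544508240, 176884435466141920, 64582601271508320, 17029439415305460, 3266267855991855, 455449230022215, 45911560789380, 3315494894140, 169026966570, 5942394810, 138751140, 2020920, 16335, 55]) ?_ (nng_ofL _)
  unfold Eo U
  linear_combination (norm := (simp only [ofL_cons, ofL_nil, Nat.reduceAdd, Nat.reduceMul]; push_cast; ring1)) ((75:ℝ[X]) * ((24:ℝ[X]) * Q 1 4)) * Q1_14 + ((75:ℝ[X]) * ((11769069312000:ℝ[X]) + (44659367020800:ℝ[X])*X + (70488552208320:ℝ[X])*X^2 + (60722510660448:ℝ[X])*X^3 + (31618134295384:ℝ[X])*X^4 + (10458142146452:ℝ[X])*X^5 + (2258452702506:ℝ[X])*X^6 + (323104570789:ℝ[X])*X^7 + (30783918737:ℝ[X])*X^8 + (1946505561:ℝ[X])*X^9 + (80553473:ℝ[X])*X^10 + (2119663:ℝ[X])*X^11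 + (33579:ℝ[X])*X^12 + (287:ℝ[X])*X^13 + X^14)) * Q1_4 + ((-20:ℝ[X]) * ((6:ℝ[X]) * Q 1 3)) * Q1_15 + ((-20:ℝ[X]) * ((230150688768000:ℝ[X]) + (911770840108800:ℝ[X])*X + (1513916534304000:ℝ[X])*X^2 + (1384677046778544:ℝ[X])*X^3 + (774490323887280:ℝ[X])*X^4 + (279245112069560:ℝ[X])*X^5 + (66829936353180:ℝ[X])*X^6 + (10797646422563:ℝ[X])*X^7 + (1187885217090:ℝ[X])*X^8 + (89101070630:ℝ[X])*X^9 + (4528013490:ℝ[X])*X^10 + (153408892:ℝ[X])*X^11 + (3360630:ℝ[X])*X^12 + (45010:ℝ[X])*X^13 + (330:ℝ[X])*X^14 + X^15)) * Q1_3 + ((-156920924160000:ℝ[X]) * (X + 1)^4) * Q1_3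

lemma base2_3_15 : nng (((5:ℕ):ℝ[X]) * Eo 1 3 15 - ((2*(15+1):ℕ):ℝ[X]) * U 1 3) := by
  apply nng_descale (N := 502146957312000) (by norm_num)
  refine nng_congr (q := ofL [421301297184768000, 2570507919157248000, 7020484056205977600, 11364228306134876160, 12152643842142576000, 9047516472266769600, 4815369406392849600, 1858220395224171360, 524941521934354200, 109304911084344300, 16785433326776400, 1894954728214860, 156353852475600, 9338458464600, 397559808000, 11776273560, 233674200, 2917500, 20400, 60]) ?_ (nng_ofL _)
  unfold Eo U
  linear_combination (norm := (simp only [ofL_cons, ofL_nil, Nat.reduceAdd, Nat.reduceMul]; push_cast; ring1)) ((80:ℝ[X]) * ((24:ℝ[X]) * Q 1 4)) * Q1_15 + ((80:ℝ[X]) * ((230150688768000:ℝ[X]) + (911770840108800:ℝ[X])*X + (1513916534304000:ℝ[X])*X^2 + (1384677046778544:ℝ[X])*X^3 + (774490323887280:ℝ[X])*X^4 + (279245112069560:ℝ[X])*X^5 + (66829936353180:ℝ[X])*X^6 + (10797646422563:ℝ[X])*X^7 + (1187885217090:ℝ[X])*X^8 + (89101070630:ℝ[X])*X^9 + (4528013490:ℝ[X])*X^10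 + (153408892:ℝ[X])*X^11 + (3360630:ℝ[X])*X^12 + (45010:ℝ[X])*X^13 + (330:ℝ[X])*X^14 + X^15)) * Q1_4 + ((-20:ℝ[X]) * ((6:ℝ[X]) * Q 1 3)) * Q1_16 + ((-20:ℝ[X]) * ((4833164464128000:ℝ[X]) + (19784985947596800:ℝ[X])*X + (34272627010410240:ℝ[X])*X^2 + (33064642173204864:ℝ[X])*X^3 + (19738382914337424:ℝ[X])*X^4 + (7689987870131840:ℝ[X])*X^5 + (2016605456389160:ℝ[X])*X^6 + (362687978300648:ℝ[X])*X^7 + (45224035123553:ℝ[X])*X^8 + (3927511050320:ℝ[X])*X^9 + (237204856460:ℝ[X])*X^10 + (9878526112:ℝ[X])*X^11 + (278664022:ℝ[X])*X^12 + (5157040:ℝ[X])*X^13 + (59140:ℝ[X])*X^14 + (376:ℝ[X])*X^15 + X^16)) * Q1_3 + ((-2678117105664000:ℝ[X]) * (X + 1)^4) * Q1_3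

lemma base2_3_16 : nng (((5:ℕ):ℝ[X]) * Eo 1 3 16 - ((2*(16+1):ℕ):ℝ[X]) * U 1 3) := by
  apply nng_descale (N := 8536498274304000) (by norm_num)
  refine nng_congr (q := ofL [10397454898102272000, 63326868759318528000, 174561160971597004800, 288008768775619607040, 316516098790403216640, 243944418355177893600, 135477229585688822000, 55078282390171415440, 16570814957171912840, 3715433040682835550, 621885709469178375, 77598287761578090, 7193209283562965, 492265716081100, 24615868762550, 885087218340, 22326677490, 380337750, 4110275, 25090, 65]) ?_ (nng_ofL _)
  unfold Eo U
  linear_combination (norm := (simp only [ofL_cons, ofL_nil, Nat.reduceAdd, Nat.reduceMul]; push_cast; ring1)) ((85:ℝ[X]) * ((24:ℝ[X]) * Q 1 4)) * Q1_16 + ((85:ℝ[X]) * ((4833164464128000:ℝ[X]) + (19784985947596800:ℝ[X])*X + (34272627010410240:ℝ[X])*X^2 + (33064642173204864:ℝ[X])*X^3 + (19738382914337424:ℝ[X])*X^4 + (7689987870131840:ℝ[X])*X^5 + (2016605456389160:ℝ[X])*X^6 + (362687978300648:ℝ[X])*X^7 + (45224035123553:ℝ[X])*X^8 + (3927511050320:ℝ[X])*X^9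 + (237204856460:ℝ[X])*X^10 + (9878526112:ℝ[X])*X^11 + (278664022:ℝ[X])*X^12 + (5157040:ℝ[X])*X^13 + (59140:ℝ[X])*X^14 + (376:ℝ[X])*X^15 + X^16)) * Q1_4 + ((-20:ℝ[X]) * ((6:ℝ[X]) * Q 1 3)) * Q1_17 + ((-20:ℝ[X]) * ((105639166144512000:ℝ[X]) + (449672462639769600:ℝ[X])*X + (813731418889701120:ℝ[X])*X^2 + (825602592705998976:ℝ[X])*X^3 + (523007402263489680:ℝ[X])*X^4 + (218576504420594384:ℝ[X])*X^5 + (62231227323570760:ℝ[X])*X^6 + (12314826644996512:ℝ[X])*X^7 + (1715162208539065:ℝ[X])*X^8 + (169283315462833:ℝ[X])*X^9 + (11860756670620:ℝ[X])*X^10 + (587773763148:ℝ[X])*X^11 + (20392383830:ℝ[X])*X^12 + (485898182:ℝ[X])*X^13 + (7692500:ℝ[X])*X^14 + (76364:ℝ[X])*X^15 + (425:ℝ[X])*X^16 + X^17)) * Q1_3 + ((-48373490221056000:ℝ[X]) * (X + 1)^4) * Q1_3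

lemma base2_3_17 : nng (((5:ℕ):ℝ[X]) * Eo 1 3 17 - ((2*(17+1):ℕ):ℝ[X]) * U 1 3) := by
  apply nng_descale (N := 153656968937472000) (by norm_num)
  refine nng_congr (q := ofL [236939046101581824000, 1521871749172776960000, 4382075481384009830400, 7501554699977387105280, 8530036040212989523200, 6812725128153190384320, 3941552886455959740000, 1682594755489334079680, 536376529028896248000, 128629223851608806620, 23268285617471171550, 3175249376855913630, 326306426562329850, 25154633573162870, 1444743177156300, 61151981421580, 1876160128500, 40695138120, 600657750, 5667830, 30450, 70]) ?_ (nng_ofL _)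
  unfold Eo U
  linear_combination (norm := (simp only [ofL_cons, ofL_nil, Nat.reduceAdd, Nat.reduceMul]; push_cast; ring1)) ((90:ℝ[X]) * ((24:ℝ[X]) * Q 1 4)) * Q1_17 + ((90:ℝ[X]) * ((105639166144512000:ℝ[X]) + (449672462639769600:ℝ[X])*X + (813731418889701120:ℝ[X])*X^2 + (825602592705998976:ℝ[X])*X^3 + (523007402263489680:ℝ[X])*X^4 + (218576504420594384:ℝ[X])*X^5 + (62231227323570760:ℝ[X])*X^6 + (12314826644996512:ℝ[X])*X^7 + (1715162208539065:ℝ[X])*X^8 + (169283315462833:ℝ[X])*X^9 + (11860756670620:ℝ[X])*X^10 + (587773763148:ℝ[X])*X^11 + (20392383830:ℝ[X])*X^12 + (485898182:ℝ[X])*X^13 + (7692500:ℝ[X])*X^14 + (76364:ℝ[X])*X^15 + (425:ℝ[X])*X^16 + X^17)) * Q1_4 + ((-20:ℝ[X]) * ((6:ℝ[X]) * Q 1 3)) * Q1_18 + ((-20:ℝ[X]) * ((2464913876705280000:ℝ[X]) + (10790180876185804800:ℝ[X])*X + (20257584784478530560:ℝ[X])*X^2 + (21514465738516200192:ℝ[X])*X^3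 + (14394631653926870976:ℝ[X])*X^4 + (6414271800492855888:ℝ[X])*X^5 + (1967566666261014064:ℝ[X])*X^6 + (424352308591850184:ℝ[X])*X^7 + (65241489706437252:ℝ[X])*X^8 + (7211322045457101:ℝ[X])*X^9 + (575369960758593:ℝ[X])*X^10 + (33124563747756:ℝ[X])*X^11 + (1368670217668:ℝ[X])*X^12 + (40119610734:ℝ[X])*X^13 + (817513782:ℝ[X])*X^14 + (11192868:ℝ[X])*X^15 + (97104:ℝ[X])*X^16 + (477:ℝ[X])*X^17 + X^18)) * Q1_3 + ((-921941813624832000:ℝ[X]) * (X + 1)^4) * Q1_3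

lemma base2_3_18 : nng (((5:ℕ):ℝ[X]) * Eo 1 3 18 - ((2*(18+1):ℕ):ℝ[X]) * U 1 3) := by
  apply nng_descale (N := 2919482409811968000) (by norm_num)
  refine nng_congr (q := ofL [6309001487603662848000, 40391525027691565056000, 117342996358164715008000, 204668710109045878118400, 238919246833946294649600, 197125695339836115744000, 118559493222070351221600, 52982926037835150836400, 17816956642735011126000, 4543960319974355831400, 882098537496570294150, 130502394664925654475, 14708443129337592375, 1260170241252234225, 81714648643427475, 3980810901222750, 144040834633350, 3805973051850, 71612810700, 923493975, 7668675, 36525, 75]) ?_ (nng_ofL _)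
  unfold Eo U
  linear_combination (norm := (simp only [ofL_cons, ofL_nil, Nat.reduceAdd, Nat.reduceMul]; push_cast; ring1)) ((95:ℝ[X]) * ((24:ℝ[X]) * Q 1 4)) * Q1_18 + ((95:ℝ[X]) * ((2464913876705280000:ℝ[X]) + (10790180876185804800:ℝ[X])*X + (20257584784478530560:ℝ[X])*X^2 + (21514465738516200192:ℝ[X])*X^3 + (14394631653926870976:ℝ[X])*X^4 + (6414271800492855888:ℝ[X])*X^5 + (1967566666261014064:ℝ[X])*X^6 + (424352308591850184:ℝ[X])*X^7 + (65241489706437252:ℝ[X])*X^8 + (7211322045457101:ℝ[X])*X^9 + (575369960758593:ℝ[X])*X^10 + (33124563747756:ℝ[X])*X^11 + (1368670217668:ℝ[X])*X^12 + (40119610734:ℝ[X])*X^13 + (817513782:ℝ[X])*X^14 + (11192868:ℝ[X])*X^15 + (97104:ℝ[X])*X^16 + (477:ℝ[X])*X^17 + X^18)) * Q1_4 + ((-20:ℝ[X]) * ((6:ℝ[X]) * Q 1 3)) * Q1_19 + ((-20:ℝ[X]) * ((59606099200327680000:ℝ[X]) + (270071861749240320000:ℝ[X])*X + (526703252339855808000:ℝ[X])*X^2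 + (584204509835864179200:ℝ[X])*X^3 + (411138986658706445472:ℝ[X])*X^4 + (194321791775331335376:ℝ[X])*X^5 + (63809509579129348048:ℝ[X])*X^6 + (14880493540012955464:ℝ[X])*X^7 + (2501076376067477754:ℝ[X])*X^8 + (305944627840400757:ℝ[X])*X^9 + (27392427212901036:ℝ[X])*X^10 + (1798527192091773:ℝ[X])*X^11 + (86418251486476:ℝ[X])*X^12 + (3018421578058:ℝ[X])*X^13 + (75668760384:ℝ[X])*X^14 + (1332857562:ℝ[X])*X^15 + (15932298:ℝ[X])*X^16 + (121809:ℝ[X])*X^17 + (532:ℝ[X])*X^18 + X^19)) * Q1_3 + ((-18490055262142464000:ℝ[X]) * (X + 1)^4) * Q1_3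

lemma keyB_3_4 : ((2880:ℕ):ℝ[X]) * Eo 1 3 4 = ofL [11520, 0, 37156, 21488, 8489, 2528, 434, 32, 1] + ((33552:ℕ):ℝ[X]) * X := by
  unfold Eo
  linear_combination (norm := (simp only [ofL_cons, ofL_nil, Nat.reduceAdd, Nat.reduceMul]; push_cast; ring1)) ((5:ℝ[X]) * ((24:ℝ[X]) * Q 1 4)) * Q1_4 + ((5:ℝ[X]) * ((120:ℝ[X]) + (218:ℝ[X])*X + (119:ℝ[X])*X^2 + (22:ℝ[X])*X^3 + X^4)) * Q1_4 + ((-4:ℝ[X]) * ((6:ℝ[X]) * Q 1 3)) * Q1_5 + ((-4:ℝ[X]) * ((840:ℝ[X]) + (1814:ℝ[X])*X + (1285:ℝ[X])*X^2 + (345:ℝ[X])*X^3 + (35:ℝ[X])*X^4 + X^5)) * Q1_3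

lemma base1_3_4 : nng (Eo 1 3 4) := by
  apply nng_descale (N := 2880) (by norm_num)
  refine nng_congr (q := ofL [11520, 0, 37156, 21488, 8489, 2528, 434, 32, 1] + ((33552:ℕ):ℝ[X]) * X) keyB_3_4 ?_
  exact nng_add (nng_ofL _) (nng_mul (nng_natCast _) nng_X)

lemma goodB_3_4 : GoodE (Eo 1 3 4) :=
  ⟨2880, 33552, ofL [11520, 0, 37156, 21488, 8489, 2528, 434, 32, 1], by norm_num, by norm_num, nng_ofL _, keyB_3_4⟩

lemma keyB_3_5 : ((17280:ℕ):ℝ[X]) * Eo 1 3 5 = ofL [34560, 0, 356280, 355720, 199770, 67746, 14100, 1620, 90, 2] + ((179712:ℕ):ℝ[X]) * X := by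
  unfold Eo
  linear_combination (norm := (simp only [ofL_cons, ofL_nil, Nat.reduceAdd, Nat.reduceMul]; push_cast; ring1)) ((6:ℝ[X]) * ((24:ℝ[X]) * Q 1 4)) * Q1_5 + ((6:ℝ[X]) * ((840:ℝ[X]) + (1814:ℝ[X])*X + (1285:ℝ[X])*X^2 + (345:ℝ[X])*X^3 + (35:ℝ[X])*X^4 + X^5)) * Q1_4 + ((-4:ℝ[X]) * ((6:ℝ[X]) * Q 1 3)) * Q1_6 + ((-4:ℝ[X]) * ((7920:ℝ[X]) + (18144:ℝ[X])*X + (14674:ℝ[X])*X^2 + (5205:ℝ[X])*X^3 + (805:ℝ[X])*X^4 + (51:ℝ[X])*X^5 + X^6)) * Q1_3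

lemma base1_3_5 : nng (Eo 1 3 5) := by
  apply nng_descale (N := 17280) (by norm_num)
  refine nng_congr (q := ofL [34560, 0, 356280, 355720, 199770, 67746, 14100, 1620, 90, 2] + ((179712:ℕ):ℝ[X]) * X) keyB_3_5 ?_
  exact nng_add (nng_ofL _) (nng_mul (nng_natCast _) nng_X)

lemma goodB_3_5 : GoodE (Eo 1 3 5) :=
  ⟨17280, 179712, ofL [34560, 0, 356280, 355720, 199770, 67746, 14100, 1620, 90, 2], by norm_num, by norm_num, nng_ofL _, keyB_3_5⟩

lemma keyB_3_6 : ((120960:ℕ):ℝ[X]) * Eo 1 3 6 = ofL [1209600, 0, 6879408, 6197820, 3649020, 1425879, 353619, 52470, 4350, 183, 3] + ((4419648:ℕ):ℝ[X]) * X := by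
  unfold Eo
  linear_combination (norm := (simp only [ofL_cons, ofL_nil, Nat.reduceAdd, Nat.reduceMul]; push_cast; ring1)) ((7:ℝ[X]) * ((24:ℝ[X]) * Q 1 4)) * Q1_6 + ((7:ℝ[X]) * ((7920:ℝ[X]) + (18144:ℝ[X])*X + (14674:ℝ[X])*X^2 + (5205:ℝ[X])*X^3 + (805:ℝ[X])*X^4 + (51:ℝ[X])*X^5 + X^6)) * Q1_4 + ((-4:ℝ[X]) * ((6:ℝ[X]) * Q 1 3)) * Q1_7 + ((-4:ℝ[X]) * ((75600:ℝ[X]) + (196356:ℝ[X])*X + (185080:ℝ[X])*X^2 + (79219:ℝ[X])*X^3 + (16450:ℝ[X])*X^4 + (1624:ℝ[X])*X^5 + (70:ℝ[X])*X^6 + X^7)) * Q1_3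

lemma base1_3_6 : nng (Eo 1 3 6) := by
  apply nng_descale (N := 120960) (by norm_num)
  refine nng_congr (q := ofL [1209600, 0, 6879408, 6197820, 3649020, 1425879, 353619, 52470, 4350, 183, 3] + ((4419648:ℕ):ℝ[X]) * X) keyB_3_6 ?_
  exact nng_add (nng_ofL _) (nng_mul (nng_natCast _) nng_X)

lemma goodB_3_6 : GoodE (Eo 1 3 6) :=
  ⟨120960, 4419648, ofL [1209600, 0, 6879408, 6197820, 3649020, 1425879, 353619, 52470, 4350, 183, 3], by norm_num, by norm_num, nng_ofL _, keyB_3_6⟩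

lemma keyB_3_7 : ((967680:ℕ):ℝ[X]) * Eo 1 3 7 = ofL [8709120, 0, 86864160, 96641744, 65508760, 28548068, 8102640, 1459212, 159000, 9916, 320, 4] + ((42685056:ℕ):ℝ[X]) * X := by
  unfold Eo
  linear_combination (norm := (simp only [ofL_cons, ofL_nil, Nat.reduceAdd, Nat.reduceMul]; push_cast; ring1)) ((8:ℝ[X]) * ((24:ℝ[X]) * Q 1 4)) * Q1_7 + ((8:ℝ[X]) * ((75600:ℝ[X]) + (196356:ℝ[X])*X + (185080:ℝ[X])*X^2 + (79219:ℝ[X])*X^3 + (16450:ℝ[X])*X^4 + (1624:ℝ[X])*X^5 + (70:ℝ[X])*X^6 + X^7)) * Q1_4 + ((-4:ℝ[X]) * ((6:ℝ[X]) * Q 1 3)) * Q1_8 + ((-4:ℝ[X]) * ((887040:ℝ[X]) + (2427312:ℝ[X])*X + (2515036:ℝ[X])*X^2 + (1258628:ℝ[X])*X^3 + (324569:ℝ[X])*X^4 + (43568:ℝ[X])*X^5 + (2954:ℝ[X])*X^6 + (92:ℝ[X])*X^7 + X^8)) * Q1_3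

lemma base1_3_7 : nng (Eo 1 3 7) := by
  apply nng_descale (N := 967680) (by norm_num)
  refine nng_congr (q := ofL [8709120, 0, 86864160, 96641744, 65508760, 28548068, 8102640, 1459212, 159000, 9916, 320, 4] + ((42685056:ℕ):ℝ[X]) * X) keyB_3_7 ?_
  exact nng_add (nng_ofL _) (nng_mul (nng_natCast _) nng_X)

lemma goodB_3_7 : GoodE (Eo 1 3 7) :=
  ⟨967680, 42685056, ofL [8709120, 0, 86864160, 96641744, 65508760, 28548068, 8102640, 1459212, 159000, 9916, 320, 4], by norm_num, by norm_num, nng_ofL _, keyB_3_7⟩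

lemma keyK_3_0 : nng (((3:ℕ):ℝ[X]) * Eo 1 3 0 + ((1:ℕ):ℝ[X]) * U 1 3) := by
  apply nng_descale (N := 24) (by norm_num)
  refine nng_congr (q := ofL [216, 494, 809, 1090, 831, 332, 64, 4]) ?_ (nng_ofL _)
  unfold Eo U
  linear_combination (norm := (simp only [ofL_cons, ofL_nil, Nat.reduceAdd, Nat.reduceMul]; push_cast; ring1)) ((3:ℝ[X]) * ((24:ℝ[X]) * Q 1 4)) * Q1_0 + ((3:ℝ[X]) * ((1:ℝ[X]))) * Q1_4 + ((-12:ℝ[X]) * ((6:ℝ[X]) * Q 1 3)) * Q1_1 + ((-12:ℝ[X]) * ((1:ℝ[X]) + X)) * Q1_3 + ((4:ℝ[X]) * (X + 1)^4) * Q1_3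

lemma keyK_3_1 : nng (((3:ℕ):ℝ[X]) * Eo 1 3 1 + ((1:ℕ):ℝ[X]) * U 1 3) := by
  apply nng_descale (N := 48) (by norm_num)
  refine nng_congr (q := ofL [0, 364, 1378, 2090, 1614, 658, 128, 8]) ?_ (nng_ofL _)
  unfold Eo U
  linear_combination (norm := (simp only [ofL_cons, ofL_nil, Nat.reduceAdd, Nat.reduceMul]; push_cast; ring1)) ((6:ℝ[X]) * ((24:ℝ[X]) * Q 1 4)) * Q1_1 + ((6:ℝ[X]) * ((1:ℝ[X]) + X)) * Q1_4 + ((-12:ℝ[X]) * ((6:ℝ[X]) * Q 1 3)) * Q1_2 + ((-12:ℝ[X]) * ((4:ℝ[X]) + (5:ℝ[X])*X + X^2)) * Q1_3 + ((8:ℝ[X]) * (X + 1)^4) * Q1_3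

lemma keyK_3_2 : nng (((3:ℕ):ℝ[X]) * Eo 1 3 2 + ((1:ℕ):ℝ[X]) * U 1 3) := by
  apply nng_descale (N := 144) (by norm_num)
  refine nng_congr (q := ofL [864, 3144, 5562, 6405, 4713, 1947, 381, 24]) ?_ (nng_ofL _)
  unfold Eo U
  linear_combination (norm := (simp only [ofL_cons, ofL_nil, Nat.reduceAdd, Nat.reduceMul]; push_cast; ring1)) ((9:ℝ[X]) * ((24:ℝ[X]) * Q 1 4)) * Q1_2 + ((9:ℝ[X]) * ((4:ℝ[X]) + (5:ℝ[X])*X + X^2)) * Q1_4 + ((-12:ℝ[X]) * ((6:ℝ[X]) * Q 1 3)) * Q1_3 + ((-12:ℝ[X]) * ((18:ℝ[X]) + (29:ℝ[X])*X + (12:ℝ[X])*X^2 + X^3)) * Q1_3 + ((24:ℝ[X]) * (X + 1)^4) * Q1_3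
lemma GoodE_of_base2 {c b dn dd m NU cU : ℕ} {LU : List ℕ}
    (hdd : 0 < dd) (hdn : 0 < dn) (hNU : 0 < NU) (hcU : 0 < cU)
    (h2 : nng ((dd:ℝ[X]) * Eo c b m - ((dn*(m+1):ℕ):ℝ[X]) * U c b))
    (hU : ((NU:ℕ):ℝ[X]) * U c b = ofL LU + ((cU:ℕ):ℝ[X]) * X) :
    GoodE (Eo c b m) := by
  refine ⟨dd*NU, dn*(m+1)*cU,
    (NU:ℝ[X]) * ((dd:ℝ[X]) * Eo c b m - ((dn*(m+1):ℕ):ℝ[X]) * U c b)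
      + ((dn*(m+1):ℕ):ℝ[X]) * ofL LU, by positivity, by positivity,
    nng_add (nng_mul (nng_natCast _) h2) (nng_mul (nng_natCast _) (nng_ofL _)), ?_⟩
  linear_combination (norm := (push_cast; ring1)) ((dn*(m+1):ℕ):ℝ[X]) * hU

lemma finishΔ (c bb m : ℕ) (hg : GoodE (Eo c bb m)) {x : ℝ} (hx : (c:ℝ) < x) :
    0 < (Polynomial.derivative (Δ (m+1) bb)).eval x := by
  have hE : Eo c bb m = (Δ (m+1) bb).comp (X + (c:ℝ[X])) := by
    unfold Eo Δ Q
    simp only [Nat.add_sub_cancel]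
    rw [sub_comp, mul_comp, mul_comp]
  have hpos := GoodE_deriv_pos hg (t := x - c) (by linarith)
  rw [hE, derivative_comp] at hpos
  simp only [derivative_add, derivative_X, derivative_natCast, add_zero, one_mul, eval_comp,
    eval_add, eval_X, eval_natCast] at hpos
  rwa [sub_add_cancel] at hpos

lemma Hnum_1 : ∀ n, 12 ≤ n →
    2*(1*(∑ k ∈ Ico (n-1) n, sig (k+1))) + 6*(2*sig (n+1)) + 6*(1*(n+1)^2)
      ≤ 6*(1*(∑ k ∈ range (n - 4), sig (k+1)*(n-k))) := by
  intro n hn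
  obtain ⟨t, rfl⟩ : ∃ t, n = 12 + t := ⟨n - 12, by omega⟩
  have hT : (∑ k ∈ range (12 + t - 4), (k+1)*(12 + t - k))
      ≤ ∑ k ∈ range (12 + t - 4), sig (k+1)*(12 + t - k) :=
    Finset.sum_le_sum fun k _ => Nat.mul_le_mul_right _ (sig_ge (k+1))
  have hsum := sumT (12 + t) (12 + t - 4) (by omega)
  have hS2 : ∑ k ∈ Ico (12 + t - 1) (12 + t), 2 * sig (k+1)
      ≤ (Finset.Ico (12 + t - 1) (12 + t)).card * sB (12 + t + 1) := by
    apply Finset.sum_le_card_nsmul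
    intro k hk
    have hk' := Finset.mem_Ico.1 hk
    calc 2 * sig (k+1) ≤ sB (k+1) := sig_le (k+1)
      _ ≤ sB (12 + t + 1) := sB_mono (by omega)
  rw [Nat.card_Ico, show 12 + t - (12 + t - 1) = 1 from by omega] at hS2
  rw [← Finset.mul_sum] at hS2
  have hS3 := sig_le (12 + t + 1)
  have hsB : sB (12 + t + 1) = 2*(12 + t + 1) + ((12 + t + 1)/2)*((12 + t + 1)/2+1) := rfl
  rw [hsB] at hS2 hS3
  set q := (12 + t + 1)/2 with hqdef
  have hq2 : 2*q ≤ 12 + t + 1 := by omega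
  have hq4 : (2*q)*(2*q+2) ≤ (13 + t)*(15 + t) := Nat.mul_le_mul (by omega) (by omega)
  rw [show 12 + t - 4 = 8 + t from by omega] at hT hsum ⊢
  rw [show 3*(12 + t)+2-2*(8 + t) = 22 + t from by omega,
    show (8 + t)+1 = 9 + t from by omega] at hsum
  zify at hT hsum hS2 hS3 hq4 ⊢
  nlinarith [hT, hsum, hS2, hS3, hq4, Int.natCast_nonneg t,
    mul_nonneg (Int.natCast_nonneg t) (Int.natCast_nonneg t),
    mul_nonneg (mul_nonneg (Int.natCast_nonneg t) (Int.natCast_nonneg t)) (Int.natCast_nonneg t),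
    Int.natCast_nonneg q]

lemma Hb1_1 : ∀ m, 1 ≤ m → m < 4 → nng (Eo 1 1 m) := by
  intro m h1 h2
  interval_cases m
  · exact nng_congr (Eo_self 1 1) nng_zero
  · exact base1_1_2
  · exact base1_1_3

lemma Hb2_1 : ∀ m, 4 ≤ m → m < 12 →
    nng (((2:ℕ):ℝ[X]) * Eo 1 1 m - ((1*(m+1):ℕ):ℝ[X]) * U 1 1) := by
  intro m h1 h2
  interval_cases m
  exacts [base2_1_4, base2_1_5, base2_1_6, base2_1_7, base2_1_8, base2_1_9, base2_1_10, base2_1_11]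

lemma Hk_1 : ∀ j, j < 1 → nng (((6:ℕ):ℝ[X]) * Eo 1 1 j + ((1:ℕ):ℝ[X]) * U 1 1) := by
  intro j hj
  interval_cases j
  exacts [keyK_1_0]

lemma main_1 : ∀ m, (1 ≤ m → nng (Eo 1 1 m)) ∧
    (4 ≤ m → nng (((2:ℕ):ℝ[X]) * Eo 1 1 m - ((1*(m+1):ℕ):ℝ[X]) * U 1 1)) :=
  main_ind 1 1 4 12 1 2 1 6
  (by norm_num) (by norm_num) (by norm_num) (by norm_num) (by norm_num) (by norm_num)
  Hb1_1 Hb2_1 Hk_1 Hnum_1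

lemma good_1 : ∀ m, 2 ≤ m → GoodE (Eo 1 1 m) := by
  intro m hm
  by_cases hM : m < 4
  · interval_cases m
    · exact goodB_1_2
    · exact goodB_1_3
  · exact GoodE_of_base2 (by norm_num) (by norm_num) (by norm_num) (by norm_num)
      ((main_1 m).2 (by omega)) keyU_1

lemma Hnum_2 : ∀ n, 16 ≤ n →
    3*(1*(∑ k ∈ Ico (n-2) n, sig (k+1))) + 8*(3*sig (n+1)) + 8*(1*(n+1)^2)
      ≤ 8*(1*(∑ k ∈ range (n - 6), sig (k+1)*(n-k))) := by
  intro n hn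
  obtain ⟨t, rfl⟩ : ∃ t, n = 16 + t := ⟨n - 16, by omega⟩
  have hT : (∑ k ∈ range (16 + t - 6), (k+1)*(16 + t - k))
      ≤ ∑ k ∈ range (16 + t - 6), sig (k+1)*(16 + t - k) :=
    Finset.sum_le_sum fun k _ => Nat.mul_le_mul_right _ (sig_ge (k+1))
  have hsum := sumT (16 + t) (16 + t - 6) (by omega)
  have hS2 : ∑ k ∈ Ico (16 + t - 2) (16 + t), 2 * sig (k+1)
      ≤ (Finset.Ico (16 + t - 2) (16 + t)).card * sB (16 + t + 1) := by
    apply Finset.sum_le_card_nsmul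
    intro k hk
    have hk' := Finset.mem_Ico.1 hk
    calc 2 * sig (k+1) ≤ sB (k+1) := sig_le (k+1)
      _ ≤ sB (16 + t + 1) := sB_mono (by omega)
  rw [Nat.card_Ico, show 16 + t - (16 + t - 2) = 2 from by omega] at hS2
  rw [← Finset.mul_sum] at hS2
  have hS3 := sig_le (16 + t + 1)
  have hsB : sB (16 + t + 1) = 2*(16 + t + 1) + ((16 + t + 1)/2)*((16 + t + 1)/2+1) := rfl
  rw [hsB] at hS2 hS3
  set q := (16 + t + 1)/2 with hqdef
  have hq2 : 2*q ≤ 16 + t + 1 := by omega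
  have hq4 : (2*q)*(2*q+2) ≤ (17 + t)*(19 + t) := Nat.mul_le_mul (by omega) (by omega)
  rw [show 16 + t - 6 = 10 + t from by omega] at hT hsum ⊢
  rw [show 3*(16 + t)+2-2*(10 + t) = 30 + t from by omega,
    show (10 + t)+1 = 11 + t from by omega] at hsum
  zify at hT hsum hS2 hS3 hq4 ⊢
  nlinarith [hT, hsum, hS2, hS3, hq4, Int.natCast_nonneg t,
    mul_nonneg (Int.natCast_nonneg t) (Int.natCast_nonneg t),
    mul_nonneg (mul_nonneg (Int.natCast_nonneg t) (Int.natCast_nonneg t)) (Int.natCast_nonneg t),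
    Int.natCast_nonneg q]

lemma Hb1_2 : ∀ m, 2 ≤ m → m < 6 → nng (Eo 2 2 m) := by
  intro m h1 h2
  interval_cases m
  · exact nng_congr (Eo_self 2 2) nng_zero
  · exact base1_2_3
  · exact base1_2_4
  · exact base1_2_5

lemma Hb2_2 : ∀ m, 6 ≤ m → m < 16 →
    nng (((3:ℕ):ℝ[X]) * Eo 2 2 m - ((1*(m+1):ℕ):ℝ[X]) * U 2 2) := by
  intro m h1 h2
  interval_cases m
  exacts [base2_2_6, base2_2_7, base2_2_8, base2_2_9, base2_2_10, base2_2_11, base2_2_12, base2_2_13, base2_2_14, base2_2_15]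

lemma Hk_2 : ∀ j, j < 2 → nng (((8:ℕ):ℝ[X]) * Eo 2 2 j + ((1:ℕ):ℝ[X]) * U 2 2) := by
  intro j hj
  interval_cases j
  exacts [keyK_2_0, keyK_2_1]

lemma main_2 : ∀ m, (2 ≤ m → nng (Eo 2 2 m)) ∧
    (6 ≤ m → nng (((3:ℕ):ℝ[X]) * Eo 2 2 m - ((1*(m+1):ℕ):ℝ[X]) * U 2 2)) :=
  main_ind 2 2 6 16 1 3 1 8
  (by norm_num) (by norm_num) (by norm_num) (by norm_num) (by norm_num) (by norm_num)
  Hb1_2 Hb2_2 Hk_2 Hnum_2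

lemma good_2 : ∀ m, 3 ≤ m → GoodE (Eo 2 2 m) := by
  intro m hm
  by_cases hM : m < 6
  · interval_cases m
    · exact goodB_2_3
    · exact goodB_2_4
    · exact goodB_2_5
  · exact GoodE_of_base2 (by norm_num) (by norm_num) (by norm_num) (by norm_num)
      ((main_2 m).2 (by omega)) keyU_2

lemma Hnum_3 : ∀ n, 19 ≤ n →
    5*(1*(∑ k ∈ Ico (n-3) n, sig (k+1))) + 3*(5*sig (n+1)) + 3*(2*(n+1)^2)
      ≤ 3*(2*(∑ k ∈ range (n - 8), sig (k+1)*(n-k))) := by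
  intro n hn
  obtain ⟨t, rfl⟩ : ∃ t, n = 19 + t := ⟨n - 19, by omega⟩
  have hT : (∑ k ∈ range (19 + t - 8), (k+1)*(19 + t - k))
      ≤ ∑ k ∈ range (19 + t - 8), sig (k+1)*(19 + t - k) :=
    Finset.sum_le_sum fun k _ => Nat.mul_le_mul_right _ (sig_ge (k+1))
  have hsum := sumT (19 + t) (19 + t - 8) (by omega)
  have hS2 : ∑ k ∈ Ico (19 + t - 3) (19 + t), 2 * sig (k+1)
      ≤ (Finset.Ico (19 + t - 3) (19 + t)).card * sB (19 + t + 1) := by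
    apply Finset.sum_le_card_nsmul
    intro k hk
    have hk' := Finset.mem_Ico.1 hk
    calc 2 * sig (k+1) ≤ sB (k+1) := sig_le (k+1)
      _ ≤ sB (19 + t + 1) := sB_mono (by omega)
  rw [Nat.card_Ico, show 19 + t - (19 + t - 3) = 3 from by omega] at hS2
  rw [← Finset.mul_sum] at hS2
  have hS3 := sig_le (19 + t + 1)
  have hsB : sB (19 + t + 1) = 2*(19 + t + 1) + ((19 + t + 1)/2)*((19 + t + 1)/2+1) := rfl
  rw [hsB] at hS2 hS3
  set q := (19 + t + 1)/2 with hqdef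
  have hq2 : 2*q ≤ 19 + t + 1 := by omega
  have hq4 : (2*q)*(2*q+2) ≤ (20 + t)*(22 + t) := Nat.mul_le_mul (by omega) (by omega)
  rw [show 19 + t - 8 = 11 + t from by omega] at hT hsum ⊢
  rw [show 3*(19 + t)+2-2*(11 + t) = 37 + t from by omega,
    show (11 + t)+1 = 12 + t from by omega] at hsum
  zify at hT hsum hS2 hS3 hq4 ⊢
  nlinarith [hT, hsum, hS2, hS3, hq4, Int.natCast_nonneg t,
    mul_nonneg (Int.natCast_nonneg t) (Int.natCast_nonneg t),
    mul_nonneg (mul_nonneg (Int.natCast_nonneg t) (Int.natCast_nonneg t)) (Int.natCast_nonneg t),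
    Int.natCast_nonneg q]

lemma Hb1_3 : ∀ m, 3 ≤ m → m < 8 → nng (Eo 1 3 m) := by
  intro m h1 h2
  interval_cases m
  · exact nng_congr (Eo_self 1 3) nng_zero
  · exact base1_3_4
  · exact base1_3_5
  · exact base1_3_6
  · exact base1_3_7

lemma Hb2_3 : ∀ m, 8 ≤ m → m < 19 →
    nng (((5:ℕ):ℝ[X]) * Eo 1 3 m - ((2*(m+1):ℕ):ℝ[X]) * U 1 3) := by
  intro m h1 h2
  interval_cases m
  exacts [base2_3_8, base2_3_9, base2_3_10, base2_3_11, base2_3_12, base2_3_13, base2_3_14, base2_3_15, base2_3_16, base2_3_17, base2_3_18]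

lemma Hk_3 : ∀ j, j < 3 → nng (((3:ℕ):ℝ[X]) * Eo 1 3 j + ((1:ℕ):ℝ[X]) * U 1 3) := by
  intro j hj
  interval_cases j
  exacts [keyK_3_0, keyK_3_1, keyK_3_2]

lemma main_3 : ∀ m, (3 ≤ m → nng (Eo 1 3 m)) ∧
    (8 ≤ m → nng (((5:ℕ):ℝ[X]) * Eo 1 3 m - ((2*(m+1):ℕ):ℝ[X]) * U 1 3)) :=
  main_ind 1 3 8 19 2 5 1 3
  (by norm_num) (by norm_num) (by norm_num) (by norm_num) (by norm_num) (by norm_num)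
  Hb1_3 Hb2_3 Hk_3 Hnum_3

lemma good_3 : ∀ m, 4 ≤ m → GoodE (Eo 1 3 m) := by
  intro m hm
  by_cases hM : m < 8
  · interval_cases m
    · exact goodB_3_4
    · exact goodB_3_5
    · exact goodB_3_6
    · exact goodB_3_7
  · exact GoodE_of_base2 (by norm_num) (by norm_num) (by norm_num) (by norm_num)
      ((main_3 m).2 (by omega)) keyU_3

theorem stmt1 (b : ℕ) (hb : b = 1 ∨ b = 2 ∨ b = 3) (x₀ : ℝ)
    (hx₀ : x₀ = if Odd b then 1 else 2) (a : ℕ) (ha : b + 2 ≤ a)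
    (x : ℝ) (hx : x₀ < x) :
    0 < (Polynomial.derivative (Δ a b)).eval x := by
  rcases hb with rfl | rfl | rfl
  · obtain ⟨m, rfl⟩ : ∃ m, a = m + 1 := ⟨a - 1, by omega⟩
    refine finishΔ 1 1 m (good_1 m (by omega)) ?_
    rw [hx₀, if_pos (by decide : Odd 1)] at hx
    push_cast; linarith
  · obtain ⟨m, rfl⟩ : ∃ m, a = m + 1 := ⟨a - 1, by omega⟩
    refine finishΔ 2 2 m (good_2 m (by omega)) ?_
    rw [hx₀, if_neg (by decide : ¬ Odd 2)] at hx
    push_cast; linarith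
  · obtain ⟨m, rfl⟩ : ∃ m, a = m + 1 := ⟨a - 1, by omega⟩
    refine finishΔ 1 3 m (good_3 m (by omega)) ?_
    rw [hx₀, if_pos (by decide : Odd 3)] at hx
    push_cast; linarith
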